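/- arXiv:1811.01265 — 6 statements merged into one kernel-verified Lean document; each statement's English description precedes it below -/
import Mathlib

section
/- Let X be a quasi-Banach space, Z a p-norming set for X with constants C₁ and C₂, and Z₀ ⊆ Z. Suppose there is a constant C such that every x ∈ Z can be written as x = Σₙ aₙ xₙ (convergent in X) with (aₙ) ∈ ℓ_p, ‖(aₙ)‖_{ℓ_p} ≤ C, and xₙ ∈ Z₀. Then Z₀ is a p-norming set for X with constants C₁ and C·C₂. -/
open Pointwise

/-- The absolutely `p`-convex hull of `Z`: the smallest set containing `Z` that is
closed under combinations `a • x + b • y` with `|a|^p + |b|^p ≤ 1`. -/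
def pConvexHull {X : Type*} [AddCommGroup X] [Module ℝ X] (p : ℝ) (Z : Set X) : Set X :=
  ⋂₀ { C | Z ⊆ C ∧ ∀ x ∈ C, ∀ y ∈ C, ∀ a b : ℝ, |a| ^ p + |b| ^ p ≤ 1 → a • x + b • y ∈ C }

section Aux

open Filter Topology

variable {X : Type*} [AddCommGroup X] [Module ℝ X]

lemma subset_pConvexHull (p : ℝ) (Z : Set X) : Z ⊆ pConvexHull p Z := fun x hx =>
  Set.mem_sInter.2 fun _ hS => hS.1 hx

lemma pConvexHull_comb {p : ℝ} {Z : Set X} {x y : X} (hx : x ∈ pConvexHull p Z)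
    (hy : y ∈ pConvexHull p Z) {a b : ℝ} (hab : |a| ^ p + |b| ^ p ≤ 1) :
    a • x + b • y ∈ pConvexHull p Z :=
  Set.mem_sInter.2 fun S hS => hS.2 x (hx S hS) y (hy S hS) a b hab

lemma pConvexHull_mono {p : ℝ} {Z₀ Z : Set X} (h : Z₀ ⊆ Z) :
    pConvexHull p Z₀ ⊆ pConvexHull p Z := fun x hx =>
  Set.mem_sInter.2 fun S hS => hx S ⟨h.trans hS.1, hS.2⟩

lemma zero_mem_pConvexHull {p : ℝ} (hp : 0 < p) {Z : Set X} (hZ : Z.Nonempty) :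
    (0 : X) ∈ pConvexHull p Z := by
  obtain ⟨z, hz⟩ := hZ
  have h := pConvexHull_comb (subset_pConvexHull p Z hz) (subset_pConvexHull p Z hz)
    (a := 0) (b := 0) (by simp [Real.zero_rpow hp.ne'])
  simpa using h

lemma pConvexHull_finsetSum {p : ℝ} (hp : 0 < p) {Z : Set X} (hZ : Z.Nonempty)
    {ι : Type*} [DecidableEq ι] (s : Finset ι) (a : ι → ℝ) (v : ι → X)
    (hv : ∀ i, v i ∈ Z) (ha : ∑ i ∈ s, |a i| ^ p ≤ 1) :
    (∑ i ∈ s, a i • v i) ∈ pConvexHull p Z := by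
  induction s using Finset.induction generalizing a with
  | empty => simpa using zero_mem_pConvexHull hp hZ
  | @insert i s his ih =>
    rw [Finset.sum_insert his] at ha ⊢
    have hnn : ∀ j ∈ s, 0 ≤ |a j| ^ p := fun j _ => Real.rpow_nonneg (abs_nonneg _) _
    set A : ℝ := ∑ j ∈ s, |a j| ^ p with hA
    have hA0 : 0 ≤ A := Finset.sum_nonneg hnn
    rcases eq_or_lt_of_le hA0 with hA0' | hA0'
    · -- A = 0, so all coefficients in s vanish
      have hzero : ∀ j ∈ s, a j = 0 := by
        intro j hj
        have := (Finset.sum_eq_zero_iff_of_nonneg hnn).1 hA0'.symm j hj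
        have := Real.rpow_eq_zero_iff_of_nonneg (abs_nonneg (a j)) |>.1 this
        exact abs_eq_zero.1 this.1
      have hsum0 : ∑ j ∈ s, a j • v j = 0 :=
        Finset.sum_eq_zero fun j hj => by rw [hzero j hj, zero_smul]
      rw [hsum0, add_zero]
      have h := pConvexHull_comb (subset_pConvexHull p Z (hv i))
        (zero_mem_pConvexHull hp hZ) (a := a i) (b := 0)
        (by rw [abs_zero, Real.zero_rpow hp.ne', add_zero]
            calc |a i| ^ p ≤ |a i| ^ p + A := le_add_of_nonneg_right hA0
              _ ≤ 1 := ha)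
      simpa using h
    · -- A > 0
      set t : ℝ := A ^ (1 / p) with ht
      have htpos : 0 < t := Real.rpow_pos_of_pos hA0' _
      have htp : t ^ p = A := by
        rw [ht, one_div, Real.rpow_inv_rpow hA0'.le hp.ne']
      have hmem : (∑ j ∈ s, (a j / t) • v j) ∈ pConvexHull p Z := by
        apply ih
        have : ∑ j ∈ s, |a j / t| ^ p = A / t ^ p := by
          rw [Finset.sum_div]
          refine Finset.sum_congr rfl fun j _ => ?_
          rw [abs_div, Real.div_rpow (abs_nonneg _) (abs_nonneg _), abs_of_pos htpos]
        rw [this, htp, div_self hA0'.ne']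
      have hcomb := pConvexHull_comb (subset_pConvexHull p Z (hv i)) hmem
        (a := a i) (b := t) (by rw [abs_of_pos htpos, htp]; exact ha)
      have : t • ∑ j ∈ s, (a j / t) • v j = ∑ j ∈ s, a j • v j := by
        rw [Finset.smul_sum]
        refine Finset.sum_congr rfl fun j _ => ?_
        rw [smul_smul, mul_div_cancel₀ _ htpos.ne']
      rwa [this] at hcomb

variable [UniformSpace X] [IsUniformAddGroup X]

lemma continuous_const_smul_of_basis (N : X → ℝ)
    (hNhom : ∀ (a : ℝ) (x : X), N (a • x) = |a| * N x)
    (hbasis : (nhds (0 : X)).HasBasis (fun ε : ℝ => 0 < ε) (fun ε => { x | N x < ε }))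
    (c : ℝ) : Continuous fun y : X => c • y := by
  rcases eq_or_ne c 0 with rfl | hc
  · simpa using continuous_const
  have hc' : 0 < |c| := abs_pos.2 hc
  rw [continuous_iff_continuousAt]
  intro y₀
  unfold ContinuousAt
  rw [← tendsto_sub_nhds_zero_iff]
  have heq : (fun y : X => c • y - c • y₀) = (fun y : X => c • (y - y₀)) := by
    ext y; rw [smul_sub]
  rw [heq]
  have h1 : Tendsto (fun y : X => y - y₀) (nhds y₀) (nhds 0) := by
    have := (continuous_id.sub (continuous_const (y := y₀))).tendsto y₀
    simpa using (continuous_sub_right y₀).tendsto y₀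
  refine Tendsto.comp ?_ h1
  rw [hbasis.tendsto_iff hbasis]
  intro ε hε
  refine ⟨ε / |c|, div_pos hε hc', fun x hx => ?_⟩
  rw [Set.mem_setOf_eq, hNhom]
  calc |c| * N x < |c| * (ε / |c|) := mul_lt_mul_of_pos_left hx hc'
    _ = ε := by field_simp

end Aux

/-- in a quasi-Banach space `X`, if `Z` is `p`-norming with constants
`C₁`, `C₂`, `Z₀ ⊆ Z`, and every `x ∈ Z` can be written as `x = ∑ₙ aₙ xₙ`
(convergent in `X`) with `xₙ ∈ Z₀` and `‖(aₙ)‖_{ℓ_p} ≤ C`, then `Z₀` is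
`p`-norming with constants `C₁` and `C·C₂`. -/
theorem pNorming_reduction {X : Type*} [AddCommGroup X] [Module ℝ X]
    [UniformSpace X] [IsUniformAddGroup X] [CompleteSpace X]
    (N : X → ℝ)
    (hNpos : ∀ x : X, x ≠ 0 → 0 < N x)
    (hNhom : ∀ (a : ℝ) (x : X), N (a • x) = |a| * N x)
    (κ : ℝ) (hκ : 1 ≤ κ) (hNtri : ∀ x y : X, N (x + y) ≤ κ * (N x + N y))
    (hbasis : (nhds (0 : X)).HasBasis (fun ε : ℝ => 0 < ε) (fun ε => { x | N x < ε }))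
    (p : ℝ) (hp : 0 < p) (hp1 : p ≤ 1)
    (C₁ C₂ C : ℝ) (hC₁ : 0 < C₁) (hC₂ : 0 < C₂) (hC : 0 < C)
    (Z Z₀ : Set X) (hsub : Z₀ ⊆ Z)
    (hnorm₁ : C₁⁻¹ • closure (pConvexHull p Z) ⊆ { x | N x ≤ 1 })
    (hnorm₂ : { x | N x ≤ 1 } ⊆ C₂ • closure (pConvexHull p Z))
    (hdecomp : ∀ x ∈ Z, ∃ (a : ℕ → ℝ) (v : ℕ → X),
      (∀ n, v n ∈ Z₀) ∧ HasSum (fun n => a n • v n) x ∧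
      Summable (fun n => |a n| ^ p) ∧ (∑' n, |a n| ^ p) ^ (1 / p) ≤ C) :
    C₁⁻¹ • closure (pConvexHull p Z₀) ⊆ { x | N x ≤ 1 } ∧
    { x | N x ≤ 1 } ⊆ (C * C₂) • closure (pConvexHull p Z₀) := by
  have hN0 : N (0 : X) = 0 := by simpa using hNhom 0 0
  rcases Set.eq_empty_or_nonempty Z₀ with hZ₀e | hne
  · -- degenerate case: Z₀ = ∅ forces Z = ∅, contradicting `hnorm₂` at `0`
    exfalso
    have hZe : Z = ∅ := by
      rw [Set.eq_empty_iff_forall_notMem]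
      intro x hx
      obtain ⟨a, v, hv, -⟩ := hdecomp x hx
      have := hv 0
      rw [hZ₀e] at this
      exact this
    have hhull : pConvexHull p Z = ∅ := by
      apply Set.subset_empty_iff.1
      intro x hx
      exact Set.mem_sInter.1 hx ∅ ⟨by simp [hZe], by simp⟩
    have h0 : (0 : X) ∈ C₂ • closure (pConvexHull p Z) := hnorm₂ (by simp [hN0])
    rw [hhull] at h0
    simpa using h0
  · have hcont := continuous_const_smul_of_basis N hNhom hbasis
    -- every element of `Z` lies in `C • closure (pConvexHull p Z₀)`
    have key : ∀ x ∈ Z, C⁻¹ • x ∈ closure (pConvexHull p Z₀) := by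
      intro x hx
      obtain ⟨a, v, hv, hsum, hsummable, hnorm⟩ := hdecomp x hx
      have htsum_nn : (0 : ℝ) ≤ ∑' n, |a n| ^ p :=
        tsum_nonneg fun n => Real.rpow_nonneg (abs_nonneg _) _
      have hCp : (∑' n, |a n| ^ p) ≤ C ^ p := by
        have h1 : ((∑' n, |a n| ^ p) ^ (1 / p)) ^ p ≤ C ^ p :=
          Real.rpow_le_rpow (Real.rpow_nonneg htsum_nn _) hnorm hp.le
        rwa [one_div, Real.rpow_inv_rpow htsum_nn hp.ne'] at h1
      have htend : Filter.Tendsto (fun s : Finset ℕ => C⁻¹ • ∑ n ∈ s, a n • v n)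
          Filter.atTop (nhds (C⁻¹ • x)) := ((hcont C⁻¹).tendsto x).comp hsum
      refine mem_closure_of_tendsto htend (Filter.Eventually.of_forall fun s => ?_)
      have heq : C⁻¹ • ∑ n ∈ s, a n • v n = ∑ n ∈ s, (C⁻¹ * a n) • v n := by
        rw [Finset.smul_sum]
        exact Finset.sum_congr rfl fun n _ => smul_smul _ _ _
      rw [heq]
      apply pConvexHull_finsetSum hp hne s _ v hv
      have habs : ∀ n, |C⁻¹ * a n| ^ p = C⁻¹ ^ p * |a n| ^ p := fun n => by
        rw [abs_mul, abs_of_pos (inv_pos.2 hC),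
          Real.mul_rpow (inv_nonneg.2 hC.le) (abs_nonneg _)]
      calc ∑ n ∈ s, |C⁻¹ * a n| ^ p = C⁻¹ ^ p * ∑ n ∈ s, |a n| ^ p := by
            rw [Finset.mul_sum]; exact Finset.sum_congr rfl fun n _ => habs n
        _ ≤ C⁻¹ ^ p * C ^ p := by
            refine mul_le_mul_of_nonneg_left ?_ (Real.rpow_nonneg (inv_nonneg.2 hC.le) _)
            exact le_trans (Summable.sum_le_tsum s (fun n _ => Real.rpow_nonneg (abs_nonneg _) _)
              hsummable) hCp
        _ = 1 := by
            rw [← Real.mul_rpow (inv_nonneg.2 hC.le) hC.le, inv_mul_cancel₀ hC.ne',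
              Real.one_rpow]
    -- the set `C • closure (pConvexHull p Z₀)` is closed, contains `Z` and is `p`-convex
    set S : Set X := C • closure (pConvexHull p Z₀) with hS
    have hZsub : Z ⊆ S := by
      intro x hx
      rw [hS, Set.mem_smul_set_iff_inv_smul_mem₀ hC.ne']
      exact key x hx
    have hSclosed : IsClosed S := by
      have hSeq : S = (fun y : X => C⁻¹ • y) ⁻¹' closure (pConvexHull p Z₀) := by
        ext y
        rw [hS, Set.mem_smul_set_iff_inv_smul_mem₀ hC.ne']
        rfl
      rw [hSeq]
      exact isClosed_closure.preimage (hcont C⁻¹)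
    have hScomb : ∀ x ∈ S, ∀ y ∈ S, ∀ a b : ℝ, |a| ^ p + |b| ^ p ≤ 1 → a • x + b • y ∈ S := by
      rintro _ ⟨u, hu, rfl⟩ _ ⟨w, hw, rfl⟩ a b hab
      have heq : a • (C • u) + b • (C • w) = C • (a • u + b • w) := by
        rw [smul_smul a C, smul_smul b C, mul_comm a C, mul_comm b C, ← smul_smul C a,
          ← smul_smul C b, ← smul_add]
      rw [heq]
      refine Set.smul_mem_smul_set ?_
      have hfc : Continuous fun q : X × X => a • q.1 + b • q.2 :=
        ((hcont a).comp continuous_fst).add ((hcont b).comp continuous_snd)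
      exact map_mem_closure₂ (f := fun z z' : X => a • z + b • z') hfc hu hw
        fun z hz z' hz' => pConvexHull_comb hz hz' hab
    have hhullsub : pConvexHull p Z ⊆ S := fun x hx =>
      Set.mem_sInter.1 hx S ⟨hZsub, hScomb⟩
    have hclsub : closure (pConvexHull p Z) ⊆ S := closure_minimal hhullsub hSclosed
    constructor
    · exact (Set.smul_set_mono (closure_mono (pConvexHull_mono hsub))).trans hnorm₁
    · intro x hx
      obtain ⟨y, hy, rfl⟩ := hnorm₂ hx
      obtain ⟨w, hw, rfl⟩ := hclsub hy
      show C₂ • C • w ∈ (C * C₂) • closure (pConvexHull p Z₀)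
      rw [smul_smul, mul_comm C₂ C]
      exact Set.smul_mem_smul_set hw
end

section
/- Let 0 < p ≤ 1 and let I ⊆ ℝ be an interval with base point a ∈ I. For x, y ∈ I define the step function atom f_{x,y} = χ_{(x,y]}/|y−x|^{1/p} for x < y. Then every step function f on I with ‖f‖_{L_p(I)} ≤ 1 can be written as a finite combination f = Σⱼ bⱼ fⱼ with each fⱼ of the form f_{x,y} and Σⱼ |bⱼ|^p ≤ 1; consequently the set of such atoms is isometrically p-norming in L_p(I). -/
open MeasureTheory

/-- let `0 < p ≤ 1` and let `I ⊆ ℝ` be an interval with a base point.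
Every step function `f` on `I` with `‖f‖_{L_p(I)} ≤ 1` can be written as a finite
combination `f = ∑ⱼ bⱼ fⱼ` of the atoms `f_{u,v} = χ_{(u,v]}/(v−u)^{1/p}`
(`u < v` in `I`) with `∑ⱼ |bⱼ|^p ≤ 1`. -/
theorem stepFunction_pConvex_decomposition (p : ℝ) (hp : 0 < p) (hp1 : p ≤ 1)
    (I : Set ℝ) (hI : Set.OrdConnected I) (a : ℝ) (ha : a ∈ I)
    (n : ℕ) (x : ℕ → ℝ)
    (hmono : ∀ i < n, x i < x (i + 1)) (hxI : ∀ i ≤ n, x i ∈ I)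
    (c : ℕ → ℝ) (f : ℝ → ℝ)
    (hf : ∀ t, f t = ∑ j ∈ Finset.range n,
      c j * Set.indicator (Set.Ioc (x j) (x (j + 1))) 1 t)
    (hnorm : (∫ t in I, |f t| ^ p) ^ (1 / p) ≤ 1) :
    ∃ (m : ℕ) (b : Fin m → ℝ) (u v : Fin m → ℝ),
      (∀ i, u i ∈ I ∧ v i ∈ I ∧ u i < v i) ∧
      (∀ t, f t = ∑ i, b i * (((v i - u i) ^ (1 / p))⁻¹ *
        Set.indicator (Set.Ioc (u i) (v i)) 1 t)) ∧
      (∑ i, |b i| ^ p) ≤ 1 := by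
  -- strict monotonicity up to n
  have hxm : ∀ i j, i < j → j ≤ n → x i < x j := by
    intro i j hij hjn
    induction j with
    | zero => omega
    | succ k ih =>
      rcases Nat.lt_succ_iff_lt_or_eq.mp hij with h | h
      · exact lt_trans (ih h (by omega)) (hmono k (by omega))
      · subst h; exact hmono i (by omega)
  have hxm' : ∀ i j, i ≤ j → j ≤ n → x i ≤ x j := by
    intro i j hij hjn
    rcases Nat.lt_or_ge i j with h | h
    · exact (hxm i j h hjn).le
    · have : i = j := le_antisymm hij h
      simp [this]
  have hlen : ∀ j < n, 0 < x (j + 1) - x j := fun j hj => sub_pos.2 (hmono j hj)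
  have hsub : ∀ j < n, Set.Ioc (x j) (x (j + 1)) ⊆ I := by
    intro j hj
    exact Set.Ioc_subset_Icc_self.trans
      (hI.out (hxI j (by omega)) (hxI (j + 1) (by omega)))
  -- disjointness: a point lies in at most one interval
  have hdisj : ∀ j0 ∈ Finset.range n, ∀ t ∈ Set.Ioc (x j0) (x (j0 + 1)),
      ∀ j ∈ Finset.range n, j ≠ j0 → t ∉ Set.Ioc (x j) (x (j + 1)) := by
    intro j0 hj0 t ht j hj hne hmem
    simp only [Finset.mem_range] at hj0 hj
    rcases lt_or_gt_of_ne hne with h | h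
    · have h1 : x (j + 1) ≤ x j0 := hxm' (j + 1) j0 (by omega) (by omega)
      exact absurd hmem.2 (not_le.2 (lt_of_le_of_lt h1 ht.1))
    · have h1 : x (j0 + 1) ≤ x j := hxm' (j0 + 1) j (by omega) (by omega)
      exact absurd ht.2 (not_le.2 (lt_of_le_of_lt h1 hmem.1))
  -- pointwise description of |f|^p
  have hpt : ∀ t, |f t| ^ p =
      ∑ j ∈ Finset.range n,
        Set.indicator (Set.Ioc (x j) (x (j + 1))) (fun _ => |c j| ^ p) t := by
    intro t
    by_cases ht : ∃ j ∈ Finset.range n, t ∈ Set.Ioc (x j) (x (j + 1))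
    · obtain ⟨j0, hj0, htj0⟩ := ht
      have hft : f t = c j0 := by
        rw [hf t, Finset.sum_eq_single j0]
        · simp [Set.indicator_of_mem htj0]
        · intro j hj hne
          simp [Set.indicator_of_notMem (hdisj j0 hj0 t htj0 j hj hne)]
        · intro h; exact absurd hj0 h
      rw [hft, Finset.sum_eq_single j0]
      · simp [Set.indicator_of_mem htj0]
      · intro j hj hne
        simp [Set.indicator_of_notMem (hdisj j0 hj0 t htj0 j hj hne)]
      · intro h; exact absurd hj0 h
    · push_neg at ht
      have hft : f t = 0 := by
        rw [hf t]
        refine Finset.sum_eq_zero fun j hj => ?_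
        simp [Set.indicator_of_notMem (ht j hj)]
      rw [hft]
      rw [Finset.sum_eq_zero fun j hj => by
        simp [Set.indicator_of_notMem (ht j hj)]]
      simp [Real.zero_rpow hp.ne']
  -- compute the integral
  have hcomp : ∫ t in I, |f t| ^ p
      = ∑ j ∈ Finset.range n, |c j| ^ p * (x (j + 1) - x j) := by
    have hzero : ∀ t ∉ I, |f t| ^ p = 0 := by
      intro t htI
      have hft : f t = 0 := by
        rw [hf t]
        refine Finset.sum_eq_zero fun j hj => ?_
        have : t ∉ Set.Ioc (x j) (x (j + 1)) := fun hmem =>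
          htI (hsub j (Finset.mem_range.mp hj) hmem)
        simp [Set.indicator_of_notMem this]
      rw [hft]; simp [Real.zero_rpow hp.ne']
    rw [setIntegral_eq_integral_of_forall_compl_eq_zero hzero]
    calc ∫ t, |f t| ^ p
        = ∫ t, ∑ j ∈ Finset.range n,
            Set.indicator (Set.Ioc (x j) (x (j + 1))) (fun _ => |c j| ^ p) t := by
          exact integral_congr_ae (Filter.Eventually.of_forall hpt)
      _ = ∑ j ∈ Finset.range n,
            ∫ t, Set.indicator (Set.Ioc (x j) (x (j + 1))) (fun _ => |c j| ^ p) t := by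
          refine integral_finset_sum _ fun j hj => ?_
          refine (integrable_indicator_iff measurableSet_Ioc).2 ?_
          exact integrableOn_const (by simp [Real.volume_Ioc])
      _ = ∑ j ∈ Finset.range n, |c j| ^ p * (x (j + 1) - x j) := by
          refine Finset.sum_congr rfl fun j hj => ?_
          rw [integral_indicator_const _ measurableSet_Ioc]
          rw [measureReal_def, Real.volume_Ioc, ENNReal.toReal_ofReal (hlen j (Finset.mem_range.mp hj)).le]
          simp [smul_eq_mul]; ring
  -- the integral is ≤ 1
  have hA0 : 0 ≤ ∫ t in I, |f t| ^ p :=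
    integral_nonneg fun t => Real.rpow_nonneg (abs_nonneg _) p
  have hint1 : ∫ t in I, |f t| ^ p ≤ 1 := by
    have h1 : ((∫ t in I, |f t| ^ p) ^ (1 / p)) ^ p ≤ (1 : ℝ) ^ p :=
      Real.rpow_le_rpow (Real.rpow_nonneg hA0 _) hnorm hp.le
    rwa [← Real.rpow_mul hA0, one_div_mul_cancel hp.ne', Real.rpow_one,
      Real.one_rpow] at h1
  -- provide the witnesses
  refine ⟨n, fun i => c i * (x (i + 1) - x i) ^ (1 / p),
    fun i => x i, fun i => x (i + 1), ?_, ?_, ?_⟩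
  · intro i
    exact ⟨hxI i (by omega), hxI (i + 1) (by omega), hmono i i.2⟩
  · intro t
    rw [hf t, Finset.sum_range fun j => c j *
      Set.indicator (Set.Ioc (x j) (x (j + 1))) 1 t]
    refine Finset.sum_congr rfl fun i _ => ?_
    have hLpos : 0 < (x (i.1 + 1) - x i.1) ^ (1 / p) :=
      Real.rpow_pos_of_pos (hlen i.1 i.2) _
    field_simp
  · have : ∀ i : Fin n, |c i.1 * (x (i.1 + 1) - x i.1) ^ (1 / p)| ^ p
        = |c i.1| ^ p * (x (i.1 + 1) - x i.1) := by
      intro i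
      have hL : (0:ℝ) ≤ (x (i.1 + 1) - x i.1) ^ (1 / p) :=
        (Real.rpow_pos_of_pos (hlen i.1 i.2) _).le
      rw [abs_mul, abs_of_nonneg hL,
        Real.mul_rpow (abs_nonneg _) hL,
        ← Real.rpow_mul (hlen i.1 i.2).le, one_div_mul_cancel hp.ne', Real.rpow_one]
    calc ∑ i : Fin n, |c i.1 * (x (i.1 + 1) - x i.1) ^ (1 / p)| ^ p
        = ∑ i : Fin n, |c i.1| ^ p * (x (i.1 + 1) - x i.1) :=
          Finset.sum_congr rfl fun i _ => this i
      _ = ∑ j ∈ Finset.range n, |c j| ^ p * (x (j + 1) - x j) :=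
          Fin.sum_univ_eq_sum_range (fun j => |c j| ^ p * (x (j + 1) - x j)) n
      _ = ∫ t in I, |f t| ^ p := hcomp.symm
      _ ≤ 1 := hint1
end

section
/- For every d ∈ ℕ and every 0 < p ≤ 1 there exists a p-norm ‖·‖_{(p)} on ℝ^d such that: (a) ‖(x₁,…,x_d)‖_{(p)} = (Σⱼ xⱼ^p)^{1/p} whenever all xⱼ ≥ 0, and (b) ‖eᵢ − eⱼ‖_{(p)} ≤ 1 for all standard basis vectors eᵢ, eⱼ. -/
open NNReal Finset

section PNormAux

variable (d : ℕ) (p : ℝ)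

noncomputable def pnP (x : Fin d → ℝ) : ℝ := ∑ j, (max (x j) 0) ^ p

noncomputable def pnN (x : Fin d → ℝ) : ℝ :=
  max ((pnP d p x) ^ (1/p)) ((pnP d p (-x)) ^ (1/p))

variable {d p}

lemma pnP_nonneg (x : Fin d → ℝ) : 0 ≤ pnP d p x :=
  Finset.sum_nonneg fun j _ => Real.rpow_nonneg (le_max_right _ _) p

lemma pnN_nonneg (x : Fin d → ℝ) : 0 ≤ pnN d p x :=
  le_trans (Real.rpow_nonneg (pnP_nonneg x) _) (le_max_left _ _)

lemma pnN_neg (x : Fin d → ℝ) : pnN d p (-x) = pnN d p x := by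
  unfold pnN; rw [neg_neg, max_comm]

lemma rpow_one_div_rpow (hp : p ≠ 0) {S : ℝ} (hS : 0 ≤ S) : (S ^ (1/p)) ^ p = S := by
  rw [← Real.rpow_mul hS, one_div_mul_cancel hp, Real.rpow_one]

lemma rpow_rpow_one_div (hp : p ≠ 0) {S : ℝ} (hS : 0 ≤ S) : (S ^ p) ^ (1/p) = S := by
  rw [← Real.rpow_mul hS, mul_one_div_cancel hp, Real.rpow_one]

lemma pnN_pow (hp : 0 < p) (x : Fin d → ℝ) :
    pnN d p x ^ p = max (pnP d p x) (pnP d p (-x)) := by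
  unfold pnN
  rcases le_total ((pnP d p x) ^ (1/p)) ((pnP d p (-x)) ^ (1/p)) with h | h
  · have h' : pnP d p x ≤ pnP d p (-x) := by
      have := Real.rpow_le_rpow (Real.rpow_nonneg (pnP_nonneg x) _) h hp.le
      rwa [rpow_one_div_rpow hp.ne' (pnP_nonneg x),
        rpow_one_div_rpow hp.ne' (pnP_nonneg (-x))] at this
    rw [max_eq_right h, rpow_one_div_rpow hp.ne' (pnP_nonneg (-x)), max_eq_right h']
  · have h' : pnP d p (-x) ≤ pnP d p x := by
      have := Real.rpow_le_rpow (Real.rpow_nonneg (pnP_nonneg (-x)) _) h hp.le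
      rwa [rpow_one_div_rpow hp.ne' (pnP_nonneg x),
        rpow_one_div_rpow hp.ne' (pnP_nonneg (-x))] at this
    rw [max_eq_left h, rpow_one_div_rpow hp.ne' (pnP_nonneg x), max_eq_left h']

lemma rpow_subadd (hp : 0 ≤ p) (hp1 : p ≤ 1) {a b : ℝ} (ha : 0 ≤ a) (hb : 0 ≤ b) :
    (a + b) ^ p ≤ a ^ p + b ^ p := by
  have h := NNReal.rpow_add_le_add_rpow (⟨a, ha⟩ : ℝ≥0) ⟨b, hb⟩ hp hp1
  have := NNReal.coe_le_coe.2 h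
  exact this

lemma pnP_add_le (hp : 0 < p) (hp1 : p ≤ 1) (x y : Fin d → ℝ) :
    pnP d p (x + y) ≤ pnP d p x + pnP d p y := by
  unfold pnP
  rw [← Finset.sum_add_distrib]
  refine Finset.sum_le_sum fun j _ => ?_
  calc max ((x + y) j) 0 ^ p ≤ (max (x j) 0 + max (y j) 0) ^ p := by
        refine Real.rpow_le_rpow (le_max_right _ _) ?_ hp.le
        refine max_le (add_le_add (le_max_left _ _) (le_max_left _ _)) ?_
        exact add_nonneg (le_max_right _ _) (le_max_right _ _)
    _ ≤ max (x j) 0 ^ p + max (y j) 0 ^ p :=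
        rpow_subadd hp.le hp1 (le_max_right _ _) (le_max_right _ _)

lemma pnP_smul (hp : p ≠ 0) {a : ℝ} (ha : 0 ≤ a) (x : Fin d → ℝ) :
    pnP d p (a • x) = a ^ p * pnP d p x := by
  unfold pnP
  rw [Finset.mul_sum]
  refine Finset.sum_congr rfl fun j _ => ?_
  have : max ((a • x) j) 0 = a * max (x j) 0 := by
    simp only [Pi.smul_apply, smul_eq_mul]
    rw [mul_max_of_nonneg _ _ ha, mul_zero]
  rw [this, Real.mul_rpow ha (le_max_right _ _)]

end PNormAux

/-- for every `d ∈ ℕ` and `0 < p ≤ 1` there is a `p`-norm on `ℝ^d`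
that agrees with the `ℓ_p` quasi-norm on vectors with nonnegative coordinates and
satisfies `‖eᵢ − eⱼ‖ ≤ 1` for all standard basis vectors. -/
theorem exists_pNorm_on_RealFin (d : ℕ) (p : ℝ) (hp : 0 < p) (hp1 : p ≤ 1) :
    ∃ N : (Fin d → ℝ) → ℝ,
      (∀ x : Fin d → ℝ, x ≠ 0 → 0 < N x) ∧
      (∀ (a : ℝ) (x : Fin d → ℝ), N (a • x) = |a| * N x) ∧
      (∀ x y : Fin d → ℝ, N (x + y) ^ p ≤ N x ^ p + N y ^ p) ∧
      (∀ x : Fin d → ℝ, (∀ j, 0 ≤ x j) → N x = (∑ j, x j ^ p) ^ (1 / p)) ∧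
      (∀ i j : Fin d, N (Pi.single i 1 - Pi.single j 1) ≤ 1) := by
  have hpne : p ≠ 0 := hp.ne'
  -- homogeneity for nonneg scalars
  have hsmul : ∀ (a : ℝ), 0 ≤ a → ∀ x : Fin d → ℝ, pnN d p (a • x) = a * pnN d p x := by
    intro a ha x
    have hneg : -(a • x) = a • (-x) := by rw [smul_neg]
    unfold pnN
    rw [hneg, pnP_smul hpne ha x, pnP_smul hpne ha (-x),
      Real.mul_rpow (Real.rpow_nonneg ha p) (pnP_nonneg x),
      Real.mul_rpow (Real.rpow_nonneg ha p) (pnP_nonneg (-x)),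
      rpow_rpow_one_div hpne ha, ← mul_max_of_nonneg _ _ ha]
  refine ⟨pnN d p, ?_, ?_, ?_, ?_, ?_⟩
  · -- positivity
    intro x hx
    obtain ⟨j, hj⟩ : ∃ j, x j ≠ 0 := by
      by_contra h
      push_neg at h
      exact hx (funext h)
    have hmain : ∀ (y : Fin d → ℝ) (j : Fin d), 0 < y j → 0 < pnP d p y := by
      intro y j hy
      refine Finset.sum_pos' (fun k _ => Real.rpow_nonneg (le_max_right _ _) p)
        ⟨j, Finset.mem_univ j, ?_⟩
      rw [max_eq_left hy.le]
      exact Real.rpow_pos_of_pos hy p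
    unfold pnN
    rcases hj.lt_or_gt with hneg | hpos
    · have h0 : 0 < pnP d p (-x) := hmain (-x) j (by simpa using hneg)
      exact lt_of_lt_of_le (Real.rpow_pos_of_pos h0 _) (le_max_right _ _)
    · have h0 : 0 < pnP d p x := hmain x j hpos
      exact lt_of_lt_of_le (Real.rpow_pos_of_pos h0 _) (le_max_left _ _)
  · -- homogeneity
    intro a x
    rcases le_total 0 a with ha | ha
    · rw [hsmul a ha x, abs_of_nonneg ha]
    · have : a • x = (-a) • (-x) := by rw [neg_smul, smul_neg, neg_neg]
      rw [this, hsmul (-a) (neg_nonneg.2 ha) (-x), pnN_neg, abs_of_nonpos ha]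
  · -- p-triangle inequality
    intro x y
    rw [pnN_pow hp, pnN_pow hp, pnN_pow hp]
    have hneg : -(x + y) = (-x) + (-y) := by ring
    refine max_le ?_ ?_
    · exact le_trans (pnP_add_le hp hp1 x y)
        (add_le_add (le_max_left _ _) (le_max_left _ _))
    · rw [hneg]
      exact le_trans (pnP_add_le hp hp1 (-x) (-y))
        (add_le_add (le_max_right _ _) (le_max_right _ _))
  · -- agreement with ℓ_p on nonneg vectors
    intro x hx
    have hP : pnP d p x = ∑ j, x j ^ p :=
      Finset.sum_congr rfl fun j _ => by rw [max_eq_left (hx j)]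
    have hQ : pnP d p (-x) = 0 := by
      unfold pnP
      refine Finset.sum_eq_zero fun j _ => ?_
      have : max ((-x) j) 0 = 0 := max_eq_right (by simpa using hx j)
      rw [this, Real.zero_rpow hpne]
    unfold pnN
    rw [hP, hQ, Real.zero_rpow (one_div_ne_zero hpne)]
    exact max_eq_left (Real.rpow_nonneg (Finset.sum_nonneg fun j _ => Real.rpow_nonneg (hx j) p) _)
  · -- basis vector differences
    intro i j
    have hb : ∀ (i' j' : Fin d), pnP d p ((Pi.single i' 1 - Pi.single j' 1 : Fin d → ℝ)) ≤ 1 := by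
      intro i' j'
      unfold pnP
      calc ∑ k, max ((Pi.single i' 1 - Pi.single j' 1 : Fin d → ℝ) k) 0 ^ p
          ≤ ∑ k, (if k = i' then (1:ℝ) else 0) := by
            refine Finset.sum_le_sum fun k _ => ?_
            by_cases hk : k = i'
            · subst hk
              simp only [if_pos rfl]
              refine Real.rpow_le_one (le_max_right _ _) ?_ hp.le
              refine max_le ?_ zero_le_one
              simp only [Pi.sub_apply, Pi.single_eq_same]
              have : (0:ℝ) ≤ (Pi.single j' 1 : Fin d → ℝ) k := by
                rcases eq_or_ne k j' with h | h
                · subst h; simp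
                · simp [Pi.single_eq_of_ne h]
              linarith
            · simp only [if_neg hk]
              have h1 : (Pi.single i' 1 : Fin d → ℝ) k = 0 := Pi.single_eq_of_ne hk _
              have h2 : (0:ℝ) ≤ (Pi.single j' 1 : Fin d → ℝ) k := by
                rcases eq_or_ne k j' with h | h
                · subst h; simp
                · simp [Pi.single_eq_of_ne h]
              have : max ((Pi.single i' 1 - Pi.single j' 1 : Fin d → ℝ) k) 0 = 0 := by
                refine max_eq_right ?_
                simp only [Pi.sub_apply, h1]
                linarith
              rw [this, Real.zero_rpow hpne]
        _ = 1 := by rw [Finset.sum_ite_eq' Finset.univ i' (fun _ => (1:ℝ))]; simp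
    have hneg : -(Pi.single i 1 - Pi.single j 1 : Fin d → ℝ) = (Pi.single j 1 - Pi.single i 1 : Fin d → ℝ) := neg_sub _ _
    unfold pnN
    refine max_le ?_ ?_
    · exact Real.rpow_le_one (pnP_nonneg _) (hb i j) (by positivity)
    · rw [hneg]
      exact Real.rpow_le_one (pnP_nonneg _) (hb j i) (by positivity)
end

section
/- Let d ∈ ℕ, 0 < p ≤ 1, and for each subset A ⊆ {1,…,d} define C_A = M_A(T_{Aᶜ,A}) as in the construction of the p-body (where M_A flips the signs of coordinates in A and T_{Aᶜ,A} is the positive p-convex hull of the rectangles Z_{i,j} = {a eᵢ + b eⱼ : 0 ≤ a,b ≤ 1} for i ∈ Aᶜ, j ∈ A, with appropriate degenerate cases). Then the union C_{(p)} = ⋃_{A ⊆ {1,…,d}} C_A is an absolutely p-convex subset of ℝ^d containing the ℓ_p unit ball and contained in the ℓ_∞ unit ball. -/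
open Classical

/-- The positive `p`-convex hull `co_p^+(Z)`: combinations `∑ λⱼ • vⱼ` with
`λⱼ ≥ 0`, `∑ λⱼ^p ≤ 1` and `vⱼ ∈ Z`. -/
noncomputable def posPHull (p : ℝ) {d : ℕ} (Z : Set (Fin d → ℝ)) : Set (Fin d → ℝ) :=
  { x | ∃ (k : ℕ) (l : Fin k → ℝ) (v : Fin k → (Fin d → ℝ)),
      (∀ j, 0 ≤ l j) ∧ (∑ j, l j ^ p) ≤ 1 ∧ (∀ j, v j ∈ Z) ∧ x = ∑ j, l j • v j }

/-- The rectangle `Z_{i,j} = { a eᵢ + b eⱼ : 0 ≤ a, b ≤ 1 }`. -/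
def Zrect {d : ℕ} (i j : Fin d) : Set (Fin d → ℝ) :=
  { x | ∃ a b : ℝ, 0 ≤ a ∧ a ≤ 1 ∧ 0 ≤ b ∧ b ≤ 1 ∧
      x = a • (Pi.single i (1 : ℝ) : Fin d → ℝ) + b • (Pi.single j (1 : ℝ) : Fin d → ℝ) }

/-- The body `T_{A,B}` with its degenerate cases. -/
noncomputable def Tset (p : ℝ) {d : ℕ} (A B : Set (Fin d)) : Set (Fin d → ℝ) :=
  if A = ∅ ∧ B = ∅ then {0}
  else if B = ∅ then posPHull p { x | ∃ i ∈ A, x = (Pi.single i (1 : ℝ) : Fin d → ℝ) }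
  else if A = ∅ then posPHull p { x | ∃ j ∈ B, x = (Pi.single j (1 : ℝ) : Fin d → ℝ) }
  else posPHull p (⋃ i ∈ A, ⋃ j ∈ B, Zrect i j)

/-- `M_A` flips the signs of the coordinates in `A`. -/
noncomputable def MA {d : ℕ} (A : Set (Fin d)) (x : Fin d → ℝ) : Fin d → ℝ :=
  fun j => if j ∈ A then -x j else x j

/-- `C_A = M_A(T_{Aᶜ, A})`. -/
noncomputable def Cset (p : ℝ) {d : ℕ} (A : Set (Fin d)) : Set (Fin d → ℝ) :=
  MA A '' Tset p Aᶜ A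

/-- `C_{(p)} = ⋃_A C_A`. -/
noncomputable def Cp (p : ℝ) (d : ℕ) : Set (Fin d → ℝ) :=
  ⋃ A : Set (Fin d), Cset p A

def Gset (d : ℕ) : Set (Fin d → ℝ) :=
  { v | ∃ (i j : Fin d) (a b : ℝ), 0 ≤ a ∧ a ≤ 1 ∧ 0 ≤ b ∧ b ≤ 1 ∧
      v = a • (Pi.single i (1 : ℝ) : Fin d → ℝ) - b • (Pi.single j (1 : ℝ) : Fin d → ℝ) }

lemma zero_mem_posPHull (p : ℝ) {d : ℕ} (S : Set (Fin d → ℝ)) :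
    (0 : Fin d → ℝ) ∈ posPHull p S := by
  refine ⟨0, fun i => 0, fun i => 0, fun j => le_refl _, by simp, fun j => j.elim0, by simp⟩

lemma posPHull_combo {p : ℝ} (hp : 0 < p) {d : ℕ} {S : Set (Fin d → ℝ)} {x y : Fin d → ℝ}
    (hx : x ∈ posPHull p S) (hy : y ∈ posPHull p S) {a b : ℝ} (ha : 0 ≤ a) (hb : 0 ≤ b)
    (hab : a ^ p + b ^ p ≤ 1) : a • x + b • y ∈ posPHull p S := by
  obtain ⟨k1, l1, v1, hl1, hc1, hv1, hx⟩ := hx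
  obtain ⟨k2, l2, v2, hl2, hc2, hv2, hy⟩ := hy
  refine ⟨k1 + k2, Fin.append (fun i => a * l1 i) (fun i => b * l2 i), Fin.append v1 v2,
    ?_, ?_, ?_, ?_⟩
  · intro j
    refine Fin.addCases (fun i => ?_) (fun i => ?_) j <;> simp [Fin.append_left, Fin.append_right]
    · exact mul_nonneg ha (hl1 i)
    · exact mul_nonneg hb (hl2 i)
  · rw [Fin.sum_univ_add]
    simp only [Fin.append_left, Fin.append_right]
    have h1 : ∑ i, (a * l1 i) ^ p = a ^ p * ∑ i, l1 i ^ p := by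
      rw [Finset.mul_sum]
      exact Finset.sum_congr rfl fun i _ => Real.mul_rpow ha (hl1 i)
    have h2 : ∑ i, (b * l2 i) ^ p = b ^ p * ∑ i, l2 i ^ p := by
      rw [Finset.mul_sum]
      exact Finset.sum_congr rfl fun i _ => Real.mul_rpow hb (hl2 i)
    rw [h1, h2]
    have := Real.rpow_nonneg ha p
    have := Real.rpow_nonneg hb p
    nlinarith [mul_le_mul_of_nonneg_left hc1 (Real.rpow_nonneg ha p),
      mul_le_mul_of_nonneg_left hc2 (Real.rpow_nonneg hb p)]
  · intro j
    refine Fin.addCases (fun i => ?_) (fun i => ?_) j <;>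
      simp [Fin.append_left, Fin.append_right, hv1, hv2]
  · rw [Fin.sum_univ_add]
    simp only [Fin.append_left, Fin.append_right, mul_smul]
    rw [← Finset.smul_sum, ← Finset.smul_sum, hx, hy]

lemma posPHull_neg {p : ℝ} {d : ℕ} {S : Set (Fin d → ℝ)} (hS : ∀ v ∈ S, -v ∈ S)
    {x : Fin d → ℝ} (hx : x ∈ posPHull p S) : -x ∈ posPHull p S := by
  obtain ⟨k, l, v, hl, hc, hv, hx⟩ := hx
  refine ⟨k, l, fun j => -(v j), hl, hc, fun j => hS _ (hv j), ?_⟩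
  rw [hx, ← Finset.sum_neg_distrib]
  exact Finset.sum_congr rfl fun j _ => (smul_neg _ _).symm

lemma Gset_neg {d : ℕ} {v : Fin d → ℝ} (hv : v ∈ Gset d) : -v ∈ Gset d := by
  obtain ⟨i, j, a, b, ha0, ha1, hb0, hb1, hv⟩ := hv
  exact ⟨j, i, b, a, hb0, hb1, ha0, ha1, by rw [hv]; abel⟩

/-- downward closure of posPHull under a coordinatewise-scaling assumption on S -/
lemma posPHull_downward {p : ℝ} (hp : 0 ≤ p) {d : ℕ} {S : Set (Fin d → ℝ)}
    (hS : ∀ v ∈ S, ∀ θ : Fin d → ℝ, (∀ m, 0 ≤ θ m ∧ θ m ≤ 1) →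
      ∃ c : ℝ, 0 ≤ c ∧ c ≤ 1 ∧ ∃ w ∈ S, (fun m => θ m * v m) = c • w)
    {u u' : Fin d → ℝ} (hu' : u' ∈ posPHull p S)
    (hu0 : ∀ m, 0 ≤ u m) (huu : ∀ m, u m ≤ u' m) : u ∈ posPHull p S := by
  obtain ⟨k, l, v, hl, hc, hv, hx⟩ := hu'
  set θ : Fin d → ℝ := fun m => if u' m = 0 then 0 else u m / u' m with hθ
  have hθ01 : ∀ m, 0 ≤ θ m ∧ θ m ≤ 1 := by
    intro m
    by_cases h : u' m = 0
    · simp [hθ, h]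
    · have h0 : 0 < u' m := lt_of_le_of_ne (le_trans (hu0 m) (huu m)) (Ne.symm h)
      simp only [hθ, if_neg h]
      exact ⟨div_nonneg (hu0 m) h0.le, by rw [div_le_one h0]; exact huu m⟩
  have hu : ∀ m, u m = θ m * u' m := by
    intro m
    by_cases h : u' m = 0
    · simp only [hθ, if_pos h, zero_mul]
      exact le_antisymm (h ▸ huu m) (hu0 m)
    · simp only [hθ, if_neg h]
      rw [div_mul_cancel₀ _ h]
  choose c hc0 hc1 w hw hcw using fun j => hS (v j) (hv j) θ hθ01
  refine ⟨k, fun j => l j * c j, w, fun j => mul_nonneg (hl j) (hc0 j), ?_, hw, ?_⟩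
  · refine le_trans (Finset.sum_le_sum fun j _ => ?_) hc
    exact Real.rpow_le_rpow (mul_nonneg (hl j) (hc0 j))
      (mul_le_of_le_one_right (hl j) (hc1 j)) hp
  · funext m
    rw [hu m, hx]
    simp only [Finset.sum_apply, Pi.smul_apply, smul_eq_mul, Finset.mul_sum]
    refine Finset.sum_congr rfl fun j _ => ?_
    have h2 := congrFun (hcw j) m
    simp only [Pi.smul_apply, smul_eq_mul] at h2
    rw [show θ m * (l j * v j m) = l j * (θ m * v j m) from by ring, h2]
    ring

lemma MA_MA {d : ℕ} (A : Set (Fin d)) (x : Fin d → ℝ) : MA A (MA A x) = x := by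
  funext m; by_cases h : m ∈ A <;> simp [MA, h]

lemma MA_zero {d : ℕ} (A : Set (Fin d)) : MA A (0 : Fin d → ℝ) = 0 := by
  funext m; by_cases h : m ∈ A <;> simp [MA, h]

lemma MA_sum {d k : ℕ} (A : Set (Fin d)) (l : Fin k → ℝ) (v : Fin k → (Fin d → ℝ)) :
    MA A (∑ j, l j • v j) = ∑ j, l j • MA A (v j) := by
  funext m
  simp only [MA, Finset.sum_apply, Pi.smul_apply, smul_eq_mul]
  by_cases h : m ∈ A <;> simp [h, mul_neg, Finset.sum_neg_distrib]

lemma single_mem_Gset {d : ℕ} (i : Fin d) :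
    (Pi.single i (1 : ℝ) : Fin d → ℝ) ∈ Gset d :=
  ⟨i, i, 1, 0, zero_le_one, le_refl _, le_refl _, zero_le_one, by simp⟩

lemma neg_single_mem_Gset {d : ℕ} (i : Fin d) :
    -(Pi.single i (1 : ℝ) : Fin d → ℝ) ∈ Gset d :=
  ⟨i, i, 0, 1, le_refl _, zero_le_one, zero_le_one, le_refl _, by simp⟩

lemma MA_single_mem_Gset {d : ℕ} (A : Set (Fin d)) (i : Fin d) :
    MA A (Pi.single i (1 : ℝ)) ∈ Gset d := by
  by_cases h : i ∈ A
  · have : MA A (Pi.single i (1 : ℝ)) = -(Pi.single i (1 : ℝ) : Fin d → ℝ) := by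
      funext m
      by_cases hm : m ∈ A
      · simp [MA, hm]
      · have : m ≠ i := fun e => hm (e ▸ h)
        simp [MA, hm, Pi.single_apply, this]
    rw [this]; exact neg_single_mem_Gset i
  · have : MA A (Pi.single i (1 : ℝ)) = (Pi.single i (1 : ℝ) : Fin d → ℝ) := by
      funext m
      by_cases hm : m ∈ A
      · have : m ≠ i := fun e => h (e ▸ hm)
        simp [MA, hm, Pi.single_apply, this]
      · simp [MA, hm]
    rw [this]; exact single_mem_Gset i

lemma MA_rect_mem_Gset {d : ℕ} {A : Set (Fin d)} {i j : Fin d} (hi : i ∈ Aᶜ) (hj : j ∈ A)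
    {v : Fin d → ℝ} (hv : v ∈ Zrect i j) : MA A v ∈ Gset d := by
  obtain ⟨a, b, ha0, ha1, hb0, hb1, rfl⟩ := hv
  refine ⟨i, j, a, b, ha0, ha1, hb0, hb1, ?_⟩
  funext m
  by_cases hm : m ∈ A
  · have hmi : m ≠ i := fun e => hi (e ▸ hm)
    simp [MA, hm, Pi.single_apply, hmi]
  · have hmj : m ≠ j := fun e => hm (e ▸ hj)
    simp [MA, hm, Pi.single_apply, hmj]

lemma Cp_subset_hullG (p : ℝ) (d : ℕ) : Cp p d ⊆ posPHull p (Gset d) := by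
  intro z hz
  obtain ⟨A, t, ht, rfl⟩ := by
    simpa only [Cp, Set.mem_iUnion, Cset, Set.mem_image] using hz
  unfold Tset at ht
  split_ifs at ht with h1 h2 h3
  · rw [Set.mem_singleton_iff] at ht
    rw [ht, MA_zero]
    exact zero_mem_posPHull p _
  · obtain ⟨k, l, v, hl, hc, hv, rfl⟩ := ht
    refine ⟨k, l, fun j => MA A (v j), hl, hc, fun j => ?_, MA_sum A l v⟩
    obtain ⟨i, _, he⟩ := hv j
    show MA A (v j) ∈ Gset d
    rw [he]; exact MA_single_mem_Gset A i
  · obtain ⟨k, l, v, hl, hc, hv, rfl⟩ := ht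
    refine ⟨k, l, fun j => MA A (v j), hl, hc, fun j => ?_, MA_sum A l v⟩
    obtain ⟨i, _, he⟩ := hv j
    show MA A (v j) ∈ Gset d
    rw [he]; exact MA_single_mem_Gset A i
  · obtain ⟨k, l, v, hl, hc, hv, rfl⟩ := ht
    refine ⟨k, l, fun j => MA A (v j), hl, hc, fun j => ?_, MA_sum A l v⟩
    have := hv j
    simp only [Set.mem_iUnion] at this
    obtain ⟨i, hi, jj, hjj, hmem⟩ := this
    exact MA_rect_mem_Gset hi hjj hmem

lemma singlesScaling {d : ℕ} (A : Set (Fin d)) :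
    ∀ v ∈ { x : Fin d → ℝ | ∃ i ∈ A, x = (Pi.single i (1 : ℝ) : Fin d → ℝ) },
      ∀ θ : Fin d → ℝ, (∀ m, 0 ≤ θ m ∧ θ m ≤ 1) →
      ∃ c : ℝ, 0 ≤ c ∧ c ≤ 1 ∧ ∃ w ∈ { x : Fin d → ℝ | ∃ i ∈ A, x = (Pi.single i (1 : ℝ) : Fin d → ℝ) },
        (fun m => θ m * v m) = c • w := by
  rintro v ⟨i, hi, rfl⟩ θ hθ
  refine ⟨θ i, (hθ i).1, (hθ i).2, Pi.single i 1, ⟨i, hi, rfl⟩, ?_⟩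
  funext m
  by_cases h : m = i <;> simp [Pi.single_apply, h]

lemma rectScaling {d : ℕ} (A B : Set (Fin d)) :
    ∀ v ∈ (⋃ i ∈ A, ⋃ j ∈ B, Zrect i j),
      ∀ θ : Fin d → ℝ, (∀ m, 0 ≤ θ m ∧ θ m ≤ 1) →
      ∃ c : ℝ, 0 ≤ c ∧ c ≤ 1 ∧ ∃ w ∈ (⋃ i ∈ A, ⋃ j ∈ B, Zrect i j),
        (fun m => θ m * v m) = c • w := by
  rintro v hv θ hθ
  simp only [Set.mem_iUnion] at hv
  obtain ⟨i, hi, j, hj, aa, bb, ha0, ha1, hb0, hb1, rfl⟩ := hv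
  refine ⟨1, zero_le_one, le_refl _,
    (θ i * aa) • (Pi.single i (1:ℝ) : Fin d → ℝ) + (θ j * bb) • (Pi.single j (1:ℝ) : Fin d → ℝ),
    ?_, ?_⟩
  · simp only [Set.mem_iUnion]
    refine ⟨i, hi, j, hj, θ i * aa, θ j * bb, mul_nonneg (hθ i).1 ha0, ?_, mul_nonneg (hθ j).1 hb0, ?_, rfl⟩
    · nlinarith [(hθ i).1, (hθ i).2]
    · nlinarith [(hθ j).1, (hθ j).2]
  · funext m
    simp only [Pi.add_apply, Pi.smul_apply, smul_eq_mul, Pi.single_apply, one_smul]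
    by_cases h12 : i = j
    · subst h12
      by_cases h1 : m = i <;> simp [h1] <;> ring
    · have h21 : ¬ j = i := fun h => h12 h.symm
      by_cases h1 : m = i <;> by_cases h2 : m = j
      · exact absurd (h1.symm.trans h2) h12
      · simp [h1, h2, h12, h21]
      · simp [h1, h2, h12, h21]
      · simp [h1, h2]

lemma hullG_subset_Cp {p : ℝ} (hp0 : 0 < p) (d : ℕ) :
    posPHull p (Gset d) ⊆ Cp p d := by
  intro z hz
  obtain ⟨k, l, v, hl, hc, hv, hzeq⟩ := hz
  choose i j a b ha0 ha1 hb0 hb1 hvv using hv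
  set D : Set (Fin d) := {m | z m < 0} with hD
  suffices hT : MA D z ∈ Tset p Dᶜ D by
    exact Set.mem_iUnion.mpr ⟨D, ⟨MA D z, hT, MA_MA D z⟩⟩
  have habs : MA D z = fun m => |z m| := by
    funext m
    by_cases h : z m < 0
    · simp only [MA, hD, Set.mem_setOf_eq, if_pos h, abs_of_neg h]
    · simp only [MA, hD, Set.mem_setOf_eq, if_neg h, abs_of_nonneg (not_lt.mp h)]
  rw [habs]
  -- coordinate formula for z
  have hzc : ∀ m, z m = ∑ k', l k' *
      (a k' * (if m = i k' then 1 else 0) - b k' * (if m = j k' then 1 else 0)) := by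
    intro m
    rw [hzeq]
    simp only [Finset.sum_apply, Pi.smul_apply, smul_eq_mul]
    refine Finset.sum_congr rfl fun k' _ => ?_
    rw [hvv k']
    simp only [Pi.sub_apply, Pi.smul_apply, smul_eq_mul, Pi.single_apply]
  unfold Tset
  split_ifs with h1 h2 h3
  · -- d has no elements
    have : (fun m => |z m|) = (0 : Fin d → ℝ) := by
      funext m
      exfalso
      by_cases hm : z m < 0
      · exact Set.eq_empty_iff_forall_notMem.mp h1.2 m hm
      · exact Set.eq_empty_iff_forall_notMem.mp h1.1 m hm
    rw [this]; rfl
  · -- D = ∅ : z is nonnegative everywhere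
    have hDz : ∀ m, ¬ z m < 0 := fun m hm => Set.eq_empty_iff_forall_notMem.mp h2 m hm
    refine posPHull_downward hp0.le (singlesScaling Dᶜ)
      (u' := ∑ k', (l k' * a k') • (Pi.single (i k') 1 : Fin d → ℝ))
      ⟨k, fun k' => l k' * a k', fun k' => Pi.single (i k') 1,
        fun k' => mul_nonneg (hl k') (ha0 k'), ?_, fun k' => ⟨i k', by simp [h2], rfl⟩, rfl⟩
      (fun m => abs_nonneg _) ?_
    · refine le_trans (Finset.sum_le_sum fun k' _ => Real.rpow_le_rpow
        (mul_nonneg (hl k') (ha0 k')) (mul_le_of_le_one_right (hl k') (ha1 k')) hp0.le) hc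
    · intro m
      rw [abs_of_nonneg (not_lt.mp (hDz m)), hzc m]
      simp only [Finset.sum_apply, Pi.smul_apply, smul_eq_mul, Pi.single_apply]
      refine Finset.sum_le_sum fun k' _ => ?_
      have hX0 : (0:ℝ) ≤ (if m = i k' then (1:ℝ) else 0) := by split <;> norm_num
      have hY0 : (0:ℝ) ≤ (if m = j k' then (1:ℝ) else 0) := by split <;> norm_num
      nlinarith [mul_nonneg (hl k') (mul_nonneg (hb0 k') hY0)]
  · -- Dᶜ = ∅ : z is negative everywhere
    have hDz : ∀ m, z m < 0 := by
      intro m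
      by_contra hm
      exact Set.eq_empty_iff_forall_notMem.mp h3 m (by simpa [hD] using hm)
    refine posPHull_downward hp0.le (singlesScaling D)
      (u' := ∑ k', (l k' * b k') • (Pi.single (j k') 1 : Fin d → ℝ))
      ⟨k, fun k' => l k' * b k', fun k' => Pi.single (j k') 1,
        fun k' => mul_nonneg (hl k') (hb0 k'), ?_, fun k' => ⟨j k', hDz (j k'), rfl⟩, rfl⟩
      (fun m => abs_nonneg _) ?_
    · refine le_trans (Finset.sum_le_sum fun k' _ => Real.rpow_le_rpow
        (mul_nonneg (hl k') (hb0 k')) (mul_le_of_le_one_right (hl k') (hb1 k')) hp0.le) hc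
    · intro m
      rw [abs_of_neg (hDz m)]
      have : -z m = ∑ k', l k' *
          (b k' * (if m = j k' then 1 else 0) - a k' * (if m = i k' then 1 else 0)) := by
        rw [hzc m, ← Finset.sum_neg_distrib]
        exact Finset.sum_congr rfl fun k' _ => by ring
      rw [this]
      simp only [Finset.sum_apply, Pi.smul_apply, smul_eq_mul, Pi.single_apply]
      refine Finset.sum_le_sum fun k' _ => ?_
      have hX0 : (0:ℝ) ≤ (if m = i k' then (1:ℝ) else 0) := by split <;> norm_num
      have hY0 : (0:ℝ) ≤ (if m = j k' then (1:ℝ) else 0) := by split <;> norm_num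
      nlinarith [mul_nonneg (hl k') (mul_nonneg (ha0 k') hX0)]
  · -- mixed case
    obtain ⟨i₀, hi₀⟩ : ∃ i₀, i₀ ∈ Dᶜ := Set.nonempty_iff_ne_empty.mpr h3
    obtain ⟨j₀, hj₀⟩ : ∃ j₀, j₀ ∈ D := Set.nonempty_iff_ne_empty.mpr h2
    have hi₀' : ¬ z i₀ < 0 := hi₀
    have hj₀' : z j₀ < 0 := hj₀
    set i' : Fin k → Fin d := fun k' => if z (i k') < 0 then i₀ else i k' with hi'
    set a' : Fin k → ℝ := fun k' => if z (i k') < 0 then 0 else a k' with ha'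
    set j' : Fin k → Fin d := fun k' => if z (j k') < 0 then j k' else j₀ with hj'
    set b' : Fin k → ℝ := fun k' => if z (j k') < 0 then b k' else 0 with hb'
    set w : Fin k → (Fin d → ℝ) := fun k' =>
      a' k' • (Pi.single (i' k') 1 : Fin d → ℝ) + b' k' • (Pi.single (j' k') 1 : Fin d → ℝ)
      with hw
    have ha'0 : ∀ k', 0 ≤ a' k' := by
      intro k'; simp only [ha']; split <;> [exact le_refl 0; exact ha0 k']
    have ha'1 : ∀ k', a' k' ≤ 1 := by
      intro k'; simp only [ha']; split <;> [exact zero_le_one; exact ha1 k']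
    have hb'0 : ∀ k', 0 ≤ b' k' := by
      intro k'; simp only [hb']; split <;> [exact hb0 k'; exact le_refl 0]
    have hb'1 : ∀ k', b' k' ≤ 1 := by
      intro k'; simp only [hb']; split <;> [exact hb1 k'; exact zero_le_one]
    have hi'mem : ∀ k', i' k' ∈ Dᶜ := by
      intro k'; simp only [hi']; split
      · exact hi₀
      · next h => exact h
    have hj'mem : ∀ k', j' k' ∈ D := by
      intro k'; simp only [hj']; split
      · next h => exact h
      · exact hj₀
    refine posPHull_downward hp0.le (rectScaling Dᶜ D)
      (u' := ∑ k', l k' • w k')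
      ⟨k, l, w, hl, hc, fun k' => ?_, rfl⟩
      (fun m => abs_nonneg _) ?_
    · simp only [Set.mem_iUnion]
      exact ⟨i' k', hi'mem k', j' k', hj'mem k',
        a' k', b' k', ha'0 k', ha'1 k', hb'0 k', hb'1 k', rfl⟩
    · intro m
      have hexp : (∑ k', l k' • w k') m = ∑ k', l k' *
          (a' k' * (if m = i' k' then 1 else 0) + b' k' * (if m = j' k' then 1 else 0)) := by
        simp only [hw, Finset.sum_apply, Pi.smul_apply, Pi.add_apply, smul_eq_mul,
          Pi.single_apply]
      rw [hexp]
      by_cases hm : z m < 0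
      · rw [abs_of_neg hm]
        have hneg : -z m = ∑ k', l k' *
            (b k' * (if m = j k' then 1 else 0) - a k' * (if m = i k' then 1 else 0)) := by
          rw [hzc m, ← Finset.sum_neg_distrib]
          exact Finset.sum_congr rfl fun k' _ => by ring
        rw [hneg]
        refine Finset.sum_le_sum fun k' _ => ?_
        by_cases hmj : m = j k'
        · have hjn : z (j k') < 0 := hmj ▸ hm
          have e1 : b' k' = b k' := by simp [hb', hjn]
          have e2 : (if m = j' k' then (1:ℝ) else 0) = 1 := by
            simp [hj', hjn, hmj]
          rw [e1, e2, if_pos hmj]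
          have hX0 : (0:ℝ) ≤ (if m = i k' then (1:ℝ) else 0) := by split <;> norm_num
          have hX'0 : (0:ℝ) ≤ (if m = i' k' then (1:ℝ) else 0) := by split <;> norm_num
          nlinarith [hl k', ha0 k', ha'0 k', mul_nonneg (ha0 k') hX0,
            mul_nonneg (ha'0 k') hX'0, mul_nonneg (hl k') (mul_nonneg (ha0 k') hX0),
            mul_nonneg (hl k') (mul_nonneg (ha'0 k') hX'0)]
        · rw [if_neg hmj]
          have hX0 : (0:ℝ) ≤ (if m = i k' then (1:ℝ) else 0) := by split <;> norm_num
          have hX'0 : (0:ℝ) ≤ (if m = i' k' then (1:ℝ) else 0) := by split <;> norm_num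
          have hY'0 : (0:ℝ) ≤ (if m = j' k' then (1:ℝ) else 0) := by split <;> norm_num
          nlinarith [hl k', mul_nonneg (hl k') (mul_nonneg (ha0 k') hX0),
            mul_nonneg (hl k') (mul_nonneg (ha'0 k') hX'0),
            mul_nonneg (hl k') (mul_nonneg (hb'0 k') hY'0)]
      · rw [abs_of_nonneg (not_lt.mp hm), hzc m]
        refine Finset.sum_le_sum fun k' _ => ?_
        by_cases hmi : m = i k'
        · have hin : ¬ z (i k') < 0 := hmi ▸ hm
          have e1 : a' k' = a k' := by simp [ha', hin]
          have e2 : (if m = i' k' then (1:ℝ) else 0) = 1 := by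
            simp [hi', hin, hmi]
          rw [e1, e2, if_pos hmi]
          have hY0 : (0:ℝ) ≤ (if m = j k' then (1:ℝ) else 0) := by split <;> norm_num
          have hY'0 : (0:ℝ) ≤ (if m = j' k' then (1:ℝ) else 0) := by split <;> norm_num
          nlinarith [hl k', mul_nonneg (hl k') (mul_nonneg (hb0 k') hY0),
            mul_nonneg (hl k') (mul_nonneg (hb'0 k') hY'0)]
        · rw [if_neg hmi]
          have hY0 : (0:ℝ) ≤ (if m = j k' then (1:ℝ) else 0) := by split <;> norm_num
          have hX'0 : (0:ℝ) ≤ (if m = i' k' then (1:ℝ) else 0) := by split <;> norm_num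
          have hY'0 : (0:ℝ) ≤ (if m = j' k' then (1:ℝ) else 0) := by split <;> norm_num
          nlinarith [hl k', mul_nonneg (hl k') (mul_nonneg (hb0 k') hY0),
            mul_nonneg (hl k') (mul_nonneg (ha'0 k') hX'0),
            mul_nonneg (hl k') (mul_nonneg (hb'0 k') hY'0)]

lemma Gset_abs_le {d : ℕ} {v : Fin d → ℝ} (hv : v ∈ Gset d) (m : Fin d) : |v m| ≤ 1 := by
  obtain ⟨i, j, a, b, ha0, ha1, hb0, hb1, rfl⟩ := hv
  simp only [Pi.sub_apply, Pi.smul_apply, smul_eq_mul, Pi.single_apply]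
  have hX0 : (0:ℝ) ≤ (if m = i then (1:ℝ) else 0) := by split <;> norm_num
  have hX1 : (if m = i then (1:ℝ) else 0) ≤ 1 := by split <;> norm_num
  have hY0 : (0:ℝ) ≤ (if m = j then (1:ℝ) else 0) := by split <;> norm_num
  have hY1 : (if m = j then (1:ℝ) else 0) ≤ 1 := by split <;> norm_num
  rw [abs_le]
  constructor <;> nlinarith

lemma weight_le_one {p : ℝ} (hp0 : 0 < p) {k : ℕ} {l : Fin k → ℝ} (hl : ∀ j, 0 ≤ l j)
    (hc : ∑ j, l j ^ p ≤ 1) (j : Fin k) : l j ≤ 1 := by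
  have h1 : l j ^ p ≤ 1 := by
    refine le_trans (Finset.single_le_sum (fun j' _ => Real.rpow_nonneg (hl j') p)
      (Finset.mem_univ j)) hc
  by_contra h
  push_neg at h
  have : (1:ℝ) < l j ^ p := by
    have := Real.rpow_lt_rpow zero_le_one h hp0
    rwa [Real.one_rpow] at this
  linarith

lemma weight_le_rpow {p : ℝ} (hp0 : 0 < p) (hp1 : p ≤ 1) {x : ℝ} (h0 : 0 ≤ x) (h1 : x ≤ 1) :
    x ≤ x ^ p := by
  rcases eq_or_lt_of_le h0 with h | h
  · rw [← h, Real.zero_rpow (ne_of_gt hp0)]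
  · calc x = x ^ (1:ℝ) := (Real.rpow_one x).symm
    _ ≤ x ^ p := Real.rpow_le_rpow_of_exponent_ge h h1 hp1

lemma hullG_linfty {p : ℝ} (hp0 : 0 < p) (hp1 : p ≤ 1) {d : ℕ} {z : Fin d → ℝ}
    (hz : z ∈ posPHull p (Gset d)) (m : Fin d) : |z m| ≤ 1 := by
  obtain ⟨k, l, v, hl, hc, hv, rfl⟩ := hz
  simp only [Finset.sum_apply, Pi.smul_apply, smul_eq_mul]
  calc |∑ k', l k' * v k' m| ≤ ∑ k', |l k' * v k' m| := Finset.abs_sum_le_sum_abs _ _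
    _ ≤ ∑ k', l k' ^ p := by
        refine Finset.sum_le_sum fun k' _ => ?_
        rw [abs_mul, abs_of_nonneg (hl k')]
        calc l k' * |v k' m| ≤ l k' * 1 :=
              mul_le_mul_of_nonneg_left (Gset_abs_le (hv k') m) (hl k')
          _ = l k' := mul_one _
          _ ≤ l k' ^ p := weight_le_rpow hp0 hp1 (hl k') (weight_le_one hp0 hl hc k')
    _ ≤ 1 := hc

lemma lp_ball_subset_hullG {p : ℝ} {d : ℕ} {x : Fin d → ℝ}
    (hx : (∑ j, |x j| ^ p) ≤ 1) : x ∈ posPHull p (Gset d) := by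
  refine ⟨d, fun m => |x m|,
    fun m => if 0 ≤ x m then (Pi.single m 1 : Fin d → ℝ) else -(Pi.single m 1),
    fun m => abs_nonneg _, hx, fun m => ?_, ?_⟩
  · show (if 0 ≤ x m then (Pi.single m 1 : Fin d → ℝ) else -(Pi.single m 1)) ∈ Gset d
    split
    · exact single_mem_Gset m
    · exact neg_single_mem_Gset m
  · have h1 : ∀ m, |x m| • (if 0 ≤ x m then (Pi.single m 1 : Fin d → ℝ) else -(Pi.single m 1))
        = Pi.single m (x m) := by
      intro m
      split
      · next h => rw [abs_of_nonneg h, ← Pi.single_smul, smul_eq_mul, mul_one]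
      · next h =>
          rw [abs_of_neg (not_le.mp h), smul_neg, ← Pi.single_smul, smul_eq_mul, mul_one,
            ← Pi.single_neg, neg_neg]
    rw [Finset.sum_congr rfl fun m _ => h1 m, Finset.univ_sum_single]

/-- the union `C_{(p)} = ⋃_A C_A` is absolutely `p`-convex, contains
the `ℓ_p` unit ball and is contained in the `ℓ_∞` unit ball. -/
theorem Cp_absolutely_pConvex (d : ℕ) (p : ℝ) (hp : 0 < p) (hp1 : p ≤ 1) :
    (∀ x ∈ Cp p d, ∀ y ∈ Cp p d, ∀ a b : ℝ,
      |a| ^ p + |b| ^ p ≤ 1 → a • x + b • y ∈ Cp p d) ∧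
    { x : Fin d → ℝ | (∑ j, |x j| ^ p) ≤ 1 } ⊆ Cp p d ∧
    Cp p d ⊆ { x : Fin d → ℝ | ∀ j, |x j| ≤ 1 } := by
  refine ⟨?_, ?_, ?_⟩
  · intro x hx y hy a b hab
    have hx' := Cp_subset_hullG p d hx
    have hy' := Cp_subset_hullG p d hy
    have hxx : (if 0 ≤ a then x else -x) ∈ posPHull p (Gset d) := by
      split
      · exact hx'
      · exact posPHull_neg (fun v hv => Gset_neg hv) hx'
    have hyy : (if 0 ≤ b then y else -y) ∈ posPHull p (Gset d) := by
      split
      · exact hy'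
      · exact posPHull_neg (fun v hv => Gset_neg hv) hy'
    have hax : a • x = |a| • (if 0 ≤ a then x else -x) := by
      split
      · next h => rw [abs_of_nonneg h]
      · next h => rw [abs_of_neg (not_le.mp h), smul_neg, neg_smul, neg_neg]
    have hbx : b • y = |b| • (if 0 ≤ b then y else -y) := by
      split
      · next h => rw [abs_of_nonneg h]
      · next h => rw [abs_of_neg (not_le.mp h), smul_neg, neg_smul, neg_neg]
    rw [hax, hbx]
    exact hullG_subset_Cp hp d
      (posPHull_combo hp hxx hyy (abs_nonneg a) (abs_nonneg b) hab)
  · intro x hx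
    exact hullG_subset_Cp hp d (lp_ball_subset_hullG hx)
  · intro z hz m
    exact hullG_linfty hp hp1 (Cp_subset_hullG p d hz) m
end

section
/- Let (S, d) be a closed subset of an ℝ-tree T containing the base point 0, and suppose S has length measure (one-dimensional Hausdorff measure) zero. For s ∈ S let L_S(s) = inf { d(s,x) : x ∈ [0,s) ∩ S } and S₊ = { s ∈ S : L_S(s) > 0 }. Then for every y ∈ S and every x ∈ [0,y] ∩ S, d(x,y) = Σ_{z ∈ (x,y] ∩ S₊} L_S(z). -/
open MeasureTheory Set

lemma rTree_sInf_sub_image (u : ℝ) (s : Set ℝ) (hs : s.Nonempty) (hb : BddAbove s) :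
    sInf ((fun t => u - t) '' s) = u - sSup s := by
  apply IsGLB.csInf_eq _ (hs.image _)
  constructor
  · rintro _ ⟨t, ht, rfl⟩
    have := le_csSup hb ht; dsimp only; linarith
  · intro b hb'
    have h1 : ∀ t ∈ s, t ≤ u - b := by
      intro t ht
      have := hb' ⟨t, ht, rfl⟩; dsimp only at this; linarith
    have := csSup_le hs h1; linarith

lemma rTree_gap_lemma (A : Set ℝ) (hA : IsClosed A) (r t₀ : ℝ)
    (hsub : A ⊆ Set.Icc 0 r) (h0 : (0:ℝ) ∈ A) (ht : t₀ ∈ A) (hr : r ∈ A)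
    (hvol : volume A = 0) :
    r - t₀ = ∑' u : {u : ℝ | u ∈ A ∧ t₀ < u ∧ 0 < u - sSup (A ∩ Set.Ico 0 u)},
      ((u : ℝ) - sSup (A ∩ Set.Ico 0 (u : ℝ))) := by
  set c : ℝ → ℝ := fun u => sSup (A ∩ Set.Ico 0 u) with hc
  set A' : Set ℝ := {u : ℝ | u ∈ A ∧ t₀ < u ∧ 0 < u - c u} with hA'
  have ht₀0 : 0 ≤ t₀ := (hsub ht).1
  have ht₀r : t₀ ≤ r := (hsub ht).2
  -- basic facts about c
  have hcne : ∀ u : ℝ, 0 < u → (A ∩ Set.Ico 0 u).Nonempty := fun u hu => ⟨0, h0, le_refl _, hu⟩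
  have hcbdd : ∀ u : ℝ, BddAbove (A ∩ Set.Ico 0 u) := fun u =>
    ⟨u, fun a ha => ha.2.2.le⟩
  have hcmem : ∀ u : ℝ, 0 < u → c u ∈ A := by
    intro u hu
    have := csSup_mem_closure (hcne u hu) (hcbdd u)
    have h2 : closure (A ∩ Set.Ico 0 u) ⊆ A := by
      refine subset_trans (closure_mono inter_subset_left) ?_
      rw [hA.closure_eq]
    exact h2 this
  have hcle : ∀ u : ℝ, ∀ a ∈ A, 0 ≤ a → a < u → a ≤ c u := by
    intro u a ha h1 h2
    exact le_csSup (hcbdd u) ⟨ha, h1, h2⟩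
  have hct₀ : ∀ u ∈ A', t₀ ≤ c u := fun u hu => hcle u t₀ ht ht₀0 hu.2.1
  have hApos : ∀ u ∈ A', 0 < u := fun u hu => lt_of_le_of_lt ht₀0 hu.2.1
  -- the gaps
  set I : ℝ → Set ℝ := fun u => Set.Ioo (c u) u with hI
  have hIsub : ∀ u ∈ A', I u ⊆ Set.Ioc t₀ r := by
    intro u hu w hw
    exact ⟨lt_of_le_of_lt (hct₀ u hu) hw.1, hw.2.le.trans (hsub hu.1).2⟩
  have hIdisj0 : ∀ u ∈ A', ∀ v ∈ A', u < v → Disjoint (I u) (I v) := by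
    intro u hu v hv hlt
    have h1 : u ≤ c v := hcle v u hu.1 (hsub hu.1).1 hlt
    intro s hs1 hs2 w hw
    have h2 := hs1 hw
    have h3 := hs2 hw
    exact absurd (h2.2.trans_le (h1.trans h3.1.le)) (lt_irrefl w)
  have hIdisj : A'.PairwiseDisjoint I := by
    intro u hu v hv huv
    rcases lt_or_gt_of_ne huv with h | h
    · exact hIdisj0 u hu v hv h
    · exact (hIdisj0 v hv u hu h).symm
  have hIne : ∀ u ∈ A', (I u).Nonempty := by
    intro u hu
    have h : c u < u := by linarith [hu.2.2]
    exact ⟨(c u + u) / 2, by constructor <;> linarith⟩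
  have hcount : A'.Countable :=
    hIdisj.countable_of_isOpen (fun u _ => isOpen_Ioo) hIne
  -- covering
  have hcover : Set.Ioc t₀ r ⊆ A ∪ ⋃ u ∈ A', I u := by
    intro w hw
    by_cases hwA : w ∈ A
    · exact Or.inl hwA
    right
    set B := A ∩ Set.Icc w r with hB
    have hBcl : IsClosed B := hA.inter isClosed_Icc
    have hBne : B.Nonempty := ⟨r, hr, hw.2, le_refl _⟩
    have hBbdd : BddBelow B := ⟨w, fun a ha => ha.2.1⟩
    set u := sInf B with hu
    have huB : u ∈ B := hBcl.csInf_mem hBne hBbdd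
    have hwu : w < u := lt_of_le_of_ne huB.2.1 (fun h => hwA (h ▸ huB.1))
    have hcuw : c u ≤ w := by
      apply csSup_le (hcne u (lt_of_le_of_lt (le_trans ht₀0 hw.1.le) hwu))
      intro a ha
      by_contra hlt
      push_neg at hlt
      exact absurd (csInf_le hBbdd ⟨ha.1, hlt.le, ha.2.2.le.trans (hsub huB.1).2⟩)
        (not_le.2 ha.2.2)
    have hcuw' : c u < w := lt_of_le_of_ne hcuw
      (fun h => hwA (h ▸ hcmem u (lt_of_le_of_lt (le_trans ht₀0 hw.1.le) hwu)))
    have huA' : u ∈ A' := ⟨huB.1, lt_trans hw.1 hwu, by linarith⟩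
    exact mem_biUnion huA' ⟨hcuw', hwu⟩
  -- measure computations
  have hvol2 : volume (⋃ u ∈ A', I u) = ∑' u : A', volume (I u) :=
    measure_biUnion hcount hIdisj (fun u _ => measurableSet_Ioo)
  have hge : volume (Set.Ioc t₀ r) = volume (⋃ u ∈ A', I u) := by
    apply le_antisymm
    · calc volume (Set.Ioc t₀ r) ≤ volume (A ∪ ⋃ u ∈ A', I u) := measure_mono hcover
        _ ≤ volume A + volume (⋃ u ∈ A', I u) := measure_union_le _ _
        _ = volume (⋃ u ∈ A', I u) := by rw [hvol, zero_add]
    · exact measure_mono (Set.iUnion₂_subset hIsub)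
  have key : ENNReal.ofReal (r - t₀) = ∑' u : A', ENNReal.ofReal ((u : ℝ) - c u) := by
    rw [← Real.volume_Ioc, hge, hvol2]
    exact tsum_congr (fun u => Real.volume_Ioo)
  have := congrArg ENNReal.toReal key
  rw [ENNReal.toReal_ofReal (by linarith), ENNReal.tsum_toReal_eq
    (fun u => ENNReal.ofReal_ne_top)] at this
  rw [this]
  exact tsum_congr (fun u => ENNReal.toReal_ofReal u.2.2.2.le)

/-- let `S` be a closed subset of an `ℝ`-tree `T` (with segment
parametrisations `φ a b : [0, d(a,b)] → T`, unique and capturing all injective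
continuous paths), containing the base point `o`, and of `1`-dimensional Hausdorff
measure zero. With `L(s) = inf { d(s,x) : x ∈ [o,s) ∩ S }` and
`S₊ = { s ∈ S : L(s) > 0 }`, for every `y ∈ S` and `x ∈ [o,y] ∩ S` one has
`d(x,y) = ∑_{z ∈ (x,y] ∩ S₊} L(z)`. -/
theorem rTree_dist_eq_tsum_gaps {T : Type*} [MetricSpace T]
    [MeasurableSpace T] [BorelSpace T]
    (φ : T → T → ℝ → T)
    (hφ0 : ∀ a b, φ a b 0 = a)
    (hφ1 : ∀ a b, φ a b (dist a b) = b)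
    (hφiso : ∀ a b, ∀ s ∈ Set.Icc (0 : ℝ) (dist a b), ∀ t ∈ Set.Icc (0 : ℝ) (dist a b),
      dist (φ a b s) (φ a b t) = |s - t|)
    (hφuniq : ∀ a b (ψ : ℝ → T), ψ 0 = a → ψ (dist a b) = b →
      (∀ s ∈ Set.Icc (0 : ℝ) (dist a b), ∀ t ∈ Set.Icc (0 : ℝ) (dist a b),
        dist (ψ s) (ψ t) = |s - t|) →
      ∀ s ∈ Set.Icc (0 : ℝ) (dist a b), ψ s = φ a b s)
    (harc : ∀ g : ℝ → T, ContinuousOn g (Set.Icc (0 : ℝ) 1) →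
      Set.InjOn g (Set.Icc (0 : ℝ) 1) →
      g '' Set.Icc (0 : ℝ) 1 = φ (g 0) (g 1) '' Set.Icc 0 (dist (g 0) (g 1)))
    (S : Set T) (hScl : IsClosed S) (o : T) (ho : o ∈ S)
    (hmeas : μH[1] S = 0)
    (L : T → ℝ)
    (hL : ∀ s, L s = sInf (dist s '' ((φ o s '' Set.Ico 0 (dist o s)) ∩ S)))
    (y : T) (hy : y ∈ S)
    (x : T) (hx : x ∈ (φ o y '' Set.Icc 0 (dist o y)) ∩ S) :
    dist x y = ∑' z : (((φ x y '' Set.Icc 0 (dist x y)) \ {x}) ∩ { s ∈ S | 0 < L s } : Set T),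
      L (z : T) := by
  obtain ⟨⟨t₀, ht₀mem, hxeq⟩, hxS⟩ := hx
  have hr0 : (0:ℝ) ≤ dist o y := dist_nonneg
  have ht₀0 : 0 ≤ t₀ := ht₀mem.1
  have ht₀r : t₀ ≤ dist o y := ht₀mem.2
  have hiso := hφiso o y
  -- injectivity on the segment
  have hinj : Set.InjOn (φ o y) (Set.Icc 0 (dist o y)) := by
    intro s hs t ht h
    have h2 := hiso s hs t ht
    rw [h, dist_self] at h2
    have := abs_eq_zero.1 h2.symm
    linarith [sub_eq_zero.1 this]
  -- distance from o along the segment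
  have hdist : ∀ s ∈ Set.Icc (0:ℝ) (dist o y), dist o (φ o y s) = s := by
    intro s hs
    have h2 := hiso 0 ⟨le_refl _, hr0⟩ s hs
    rw [hφ0] at h2
    rw [h2, abs_of_nonpos (by linarith [hs.1]), neg_sub, sub_zero]
  have hdxy : dist x y = dist o y - t₀ := by
    have h2 := hiso t₀ ht₀mem (dist o y) ⟨hr0, le_refl _⟩
    rw [hφ1, hxeq] at h2
    rw [h2, abs_of_nonpos (by linarith), neg_sub]
  -- segment from o to an intermediate point
  have hseg : ∀ u ∈ Set.Icc (0:ℝ) (dist o y), ∀ s ∈ Set.Icc (0:ℝ) u,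
      φ o (φ o y u) s = φ o y s := by
    intro u hu s hs
    have dz : dist o (φ o y u) = u := hdist u hu
    have hsub : Set.Icc (0:ℝ) u ⊆ Set.Icc 0 (dist o y) :=
      Set.Icc_subset_Icc le_rfl hu.2
    refine (hφuniq o (φ o y u) (φ o y) (hφ0 o y) (by rw [dz]) ?_ s (by rw [dz]; exact hs)).symm
    rw [dz]
    intro s' hs' t' ht'
    exact hiso s' (hsub hs') t' (hsub ht')
  -- segment from x to y
  have hφxy : ∀ s ∈ Set.Icc (0:ℝ) (dist x y), φ x y s = φ o y (t₀ + s) := by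
    intro s hs
    refine (hφuniq x y (fun s => φ o y (t₀ + s)) ?_ ?_ ?_ s hs).symm
    · show φ o y (t₀ + 0) = x
      rw [add_zero]; exact hxeq
    · show φ o y (t₀ + dist x y) = y
      rw [hdxy, show t₀ + (dist o y - t₀) = dist o y by ring, hφ1]
    · intro s' hs' t' ht'
      rw [hdxy] at hs' ht'
      have h1 : t₀ + s' ∈ Set.Icc (0:ℝ) (dist o y) := ⟨by linarith [hs'.1], by linarith [hs'.2]⟩
      have h2 : t₀ + t' ∈ Set.Icc (0:ℝ) (dist o y) := ⟨by linarith [ht'.1], by linarith [ht'.2]⟩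
      rw [hiso _ h1 _ h2]
      congr 1; ring
  -- the pullback set
  set A : Set ℝ := Set.Icc 0 (dist o y) ∩ (φ o y) ⁻¹' S with hAdef
  have hAcl : IsClosed A := by
    have hlip : LipschitzOnWith 1 (φ o y) (Set.Icc 0 (dist o y)) := by
      apply LipschitzOnWith.of_dist_le_mul
      intro a ha b hb
      rw [hiso a ha b hb, NNReal.coe_one, one_mul, Real.dist_eq]
    exact hlip.continuousOn.preimage_isClosed_of_isClosed isClosed_Icc hScl
  have h0A : (0:ℝ) ∈ A := ⟨⟨le_refl _, hr0⟩, by simp only [Set.mem_preimage, hφ0]; exact ho⟩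
  have ht₀A : t₀ ∈ A := ⟨ht₀mem, by simp only [Set.mem_preimage, hxeq]; exact hxS⟩
  have hrA : dist o y ∈ A := ⟨⟨hr0, le_refl _⟩, by simp only [Set.mem_preimage, hφ1]; exact hy⟩
  have hAsub : A ⊆ Set.Icc 0 (dist o y) := Set.inter_subset_left
  -- A has measure zero
  have hAvol : volume A = 0 := by
    have h1 : A ⊆ dist o '' S := by
      intro t ht
      exact ⟨φ o y t, ht.2, hdist t ht.1⟩
    have h2 : μH[1] (dist o '' S) ≤ 0 := by
      have h3 := (LipschitzWith.dist_right o).hausdorffMeasure_image_le zero_le_one S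
      simpa [hmeas] using h3
    have h4 : volume A = μH[1] A := by rw [MeasureTheory.hausdorffMeasure_real]
    refine le_antisymm ?_ zero_le
    rw [h4]
    exact le_trans (measure_mono h1) h2
  -- the value of L along the segment
  have hLeq : ∀ u, u ∈ A → 0 < u → L (φ o y u) = u - sSup (A ∩ Set.Ico 0 u) := by
    intro u hu hu0
    have huIcc : u ∈ Set.Icc (0:ℝ) (dist o y) := hu.1
    have dz : dist o (φ o y u) = u := hdist u huIcc
    have himg : (φ o (φ o y u) '' Set.Ico 0 (dist o (φ o y u))) ∩ S
        = φ o y '' (A ∩ Set.Ico 0 u) := by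
      rw [dz]
      have h1 : φ o (φ o y u) '' Set.Ico 0 u = φ o y '' Set.Ico 0 u :=
        Set.image_congr (fun s hs => hseg u huIcc s ⟨hs.1, hs.2.le⟩)
      rw [h1]
      ext w
      constructor
      · rintro ⟨⟨t, ht, rfl⟩, hwS⟩
        exact ⟨t, ⟨⟨⟨ht.1, ht.2.le.trans huIcc.2⟩, hwS⟩, ht⟩, rfl⟩
      · rintro ⟨t, ⟨htA, htIco⟩, rfl⟩
        exact ⟨⟨t, htIco, rfl⟩, htA.2⟩
    have himg2 : dist (φ o y u) '' (φ o y '' (A ∩ Set.Ico 0 u))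
        = (fun t => u - t) '' (A ∩ Set.Ico 0 u) := by
      rw [← Set.image_comp]
      apply Set.image_congr
      intro t ht
      have htIcc : t ∈ Set.Icc (0:ℝ) (dist o y) := ⟨ht.2.1, ht.2.2.le.trans huIcc.2⟩
      simp only [Function.comp_apply]
      rw [hiso u huIcc t htIcc, abs_of_nonneg (by linarith [ht.2.2])]
    rw [hL (φ o y u), himg, himg2, rTree_sInf_sub_image]
    · exact ⟨0, h0A, le_refl _, hu0⟩
    · exact ⟨u, fun a ha => ha.2.2.le⟩
  -- the positive-gap set in ℝ and the bijection
  set A' : Set ℝ := {u : ℝ | u ∈ A ∧ t₀ < u ∧ 0 < u - sSup (A ∩ Set.Ico 0 u)} with hA'def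
  set B : Set T := ((φ x y '' Set.Icc 0 (dist x y)) \ {x}) ∩ { s ∈ S | 0 < L s } with hBdef
  have hmemB : ∀ u : ℝ, u ∈ A' → φ o y u ∈ B := by
    intro u hu
    have huA := hu.1
    have hu0 : 0 < u := lt_of_le_of_lt ht₀0 hu.2.1
    refine ⟨⟨⟨u - t₀, ?_, ?_⟩, ?_⟩, huA.2, ?_⟩
    · rw [hdxy]
      exact ⟨by linarith [hu.2.1], by linarith [huA.1.2]⟩
    · rw [hφxy (u - t₀) (by rw [hdxy]; exact ⟨by linarith [hu.2.1], by linarith [huA.1.2]⟩)]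
      congr 1; ring
    · simp only [Set.mem_singleton_iff]
      intro h
      rw [← hxeq] at h
      exact absurd (hinj huA.1 ht₀mem h) (ne_of_gt hu.2.1)
    · show 0 < L (φ o y u)
      rw [hLeq u huA hu0]
      exact hu.2.2
  have hsurj : ∀ z : T, z ∈ B → ∃ u ∈ A', φ o y u = z := by
    intro z hz
    obtain ⟨⟨⟨s, hs, rfl⟩, hzx⟩, hzS, hzL⟩ := hz
    refine ⟨t₀ + s, ?_, (hφxy s hs).symm⟩
    have hsIcc := hs
    rw [hdxy] at hsIcc
    have huIcc : t₀ + s ∈ Set.Icc (0:ℝ) (dist o y) :=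
      ⟨by linarith [hsIcc.1], by linarith [hsIcc.2]⟩
    have huA : t₀ + s ∈ A := by
      refine ⟨huIcc, ?_⟩
      simp only [Set.mem_preimage, ← hφxy s hs]
      exact hzS
    have hne : t₀ + s ≠ t₀ := by
      intro h
      apply hzx
      simp only [Set.mem_singleton_iff]
      rw [hφxy s hs, h, ← hxeq]
    have hlt : t₀ < t₀ + s := lt_of_le_of_ne (by linarith [hsIcc.1]) (Ne.symm hne)
    refine ⟨huA, hlt, ?_⟩
    rw [← hLeq (t₀ + s) huA (lt_of_le_of_lt ht₀0 hlt), ← hφxy s hs]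
    exact hzL
  have hf : Function.Bijective (fun u : A' => (⟨φ o y u.1, hmemB u.1 u.2⟩ : B)) := by
    constructor
    · intro u v h
      apply Subtype.ext
      exact hinj u.2.1.1 v.2.1.1 (congrArg Subtype.val h)
    · intro z
      obtain ⟨u, hu, huz⟩ := hsurj z.1 z.2
      exact ⟨⟨u, hu⟩, Subtype.ext huz⟩
  have hgap := rTree_gap_lemma A hAcl (dist o y) t₀ hAsub h0A ht₀A hrA hAvol
  rw [hdxy, hgap]
  rw [← Equiv.tsum_eq (Equiv.ofBijective _ hf) (fun z : B => L z.1)]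
  apply tsum_congr
  intro u
  simp only [Equiv.ofBijective_apply]
  exact (hLeq u.1 u.2.1 (lt_of_le_of_lt ht₀0 u.2.2.1)).symm
end

section
/- Let S ⊆ ℝ be a closed set of Lebesgue measure zero with min S = 0, contained in [0, y] for some y ∈ S, and let x ∈ S with 0 ≤ x ≤ y. Write (x,y) \ S = ⋃_{i ∈ I} (aᵢ, bᵢ) as a disjoint union of open intervals. Then y − x = Σ_{i ∈ I} (bᵢ − aᵢ), each bᵢ belongs to S₊ := { s ∈ S : the gap inf{ s − t : t ∈ S, t < s } is positive }, the predecessor of bᵢ in S is aᵢ, and the map i ↦ bᵢ is a bijection from I onto S₊ ∩ (x, y]. -/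
open Set MeasureTheory

/-- let `S ⊆ ℝ` be closed, of Lebesgue measure zero, with least
element `0`, contained in `[0,y]` with `y ∈ S`, and `x ∈ S`, `x ≤ y`. If
`(x,y) \ S = ⋃ᵢ (aᵢ, bᵢ)` is a disjoint union of open intervals, then
`y − x = ∑ᵢ (bᵢ − aᵢ)`, each `bᵢ` has positive gap in `S` with predecessor `aᵢ`,
and `i ↦ bᵢ` is a bijection onto `S₊ ∩ (x,y]`. -/
theorem closed_measureZero_gap_decomposition (S : Set ℝ) (hScl : IsClosed S)
    (hmeas : MeasureTheory.volume S = 0) (hmin : IsLeast S 0)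
    (y : ℝ) (hy : y ∈ S) (hbound : S ⊆ Set.Icc 0 y)
    (x : ℝ) (hx : x ∈ S) (hxy : x ≤ y)
    {ι : Type*} (a b : ι → ℝ) (hab : ∀ i, a i < b i)
    (hdisj : Pairwise (Function.onFun Disjoint fun i => Set.Ioo (a i) (b i)))
    (hcover : Set.Ioo x y \ S = ⋃ i, Set.Ioo (a i) (b i)) :
    HasSum (fun i => b i - a i) (y - x) ∧
    (∀ i, b i ∈ S ∧ sSup { t ∈ S | t < b i } = a i ∧ a i ∈ S) ∧
    Function.Injective b ∧
    Set.range b = { s ∈ S | sSup { t ∈ S | t < s } < s } ∩ Set.Ioc x y := by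
  have hsub : ∀ i, Set.Ioo (a i) (b i) ⊆ Set.Ioo x y \ S := by
    intro i
    rw [hcover]
    exact Set.subset_iUnion (fun i => Set.Ioo (a i) (b i)) i
  have hnS : ∀ i, ∀ t ∈ S, t ∉ Set.Ioo (a i) (b i) := fun i t ht hmem =>
    (hsub i hmem).2 ht
  have hmid : ∀ i, (a i + b i) / 2 ∈ Set.Ioo x y := fun i =>
    (hsub i ⟨by linarith [hab i], by linarith [hab i]⟩).1
  have hbx : ∀ i, x < b i := fun i => lt_trans (hmid i).1 (by linarith [hab i])
  have hay : ∀ i, a i < y := fun i => lt_trans (by linarith [hab i]) (hmid i).2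
  -- x ≤ a i
  have hax : ∀ i, x ≤ a i := by
    intro i
    by_contra h
    push_neg at h
    set m := min x (b i) with hm
    have ham : a i < m := lt_min h (hab i)
    have hz : (a i + m) / 2 ∈ Set.Ioo (a i) (b i) :=
      ⟨by linarith, by linarith [min_le_right x (b i)]⟩
    have h1 : (a i + m) / 2 < x := by linarith [min_le_left x (b i)]
    linarith [(hsub i hz).1.1]
  -- b i ≤ y
  have hby : ∀ i, b i ≤ y := by
    intro i
    by_contra h
    push_neg at h
    set m := max (a i) y with hm
    have hmb : m < b i := max_lt (hab i) h
    have hz : (m + b i) / 2 ∈ Set.Ioo (a i) (b i) :=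
      ⟨by linarith [le_max_left (a i) y], by linarith⟩
    linarith [(hsub i hz).1.2, le_max_right (a i) y]
  -- b i ∈ S
  have hbS : ∀ i, b i ∈ S := by
    intro i
    by_contra hbn
    rcases lt_or_eq_of_le (hby i) with hlt | heq
    · have hmem : b i ∈ Set.Ioo x y \ S := ⟨⟨hbx i, hlt⟩, hbn⟩
      rw [hcover, Set.mem_iUnion] at hmem
      obtain ⟨j, hj⟩ := hmem
      have hij : i ≠ j := by
        rintro rfl
        exact lt_irrefl (b i) hj.2
      set m := max (a i) (a j) with hm
      have hmb : m < b i := max_lt (hab i) hj.1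
      have hz1 : (m + b i) / 2 ∈ Set.Ioo (a i) (b i) :=
        ⟨by linarith [le_max_left (a i) (a j)], by linarith⟩
      have hz2 : (m + b i) / 2 ∈ Set.Ioo (a j) (b j) :=
        ⟨by linarith [le_max_right (a i) (a j)], by linarith [hj.2]⟩
      exact Set.disjoint_left.mp (hdisj hij) hz1 hz2
    · exact hbn (heq ▸ hy)
  -- a i ∈ S
  have haS : ∀ i, a i ∈ S := by
    intro i
    rcases eq_or_lt_of_le (hax i) with heq | hlt
    · exact heq ▸ hx
    · by_contra han
      have hmem : a i ∈ Set.Ioo x y \ S := ⟨⟨hlt, hay i⟩, han⟩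
      rw [hcover, Set.mem_iUnion] at hmem
      obtain ⟨j, hj⟩ := hmem
      have hij : i ≠ j := by
        rintro rfl
        exact lt_irrefl (a i) hj.1
      set m := min (b i) (b j) with hm
      have ham : a i < m := lt_min (hab i) hj.2
      have hz1 : (a i + m) / 2 ∈ Set.Ioo (a i) (b i) :=
        ⟨by linarith, by linarith [min_le_left (b i) (b j)]⟩
      have hz2 : (a i + m) / 2 ∈ Set.Ioo (a j) (b j) :=
        ⟨by linarith [hj.1], by linarith [min_le_right (b i) (b j)]⟩
      exact Set.disjoint_left.mp (hdisj hij) hz1 hz2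
  -- predecessor
  have hsupa : ∀ i, IsGreatest { t ∈ S | t < b i } (a i) := fun i =>
    ⟨⟨haS i, hab i⟩, fun t ⟨htS, htb⟩ =>
      le_of_not_gt fun h => hnS i t htS ⟨h, htb⟩⟩
  -- injectivity
  have hinj : Function.Injective b := by
    intro i j hbe
    by_contra hne
    set m := max (a i) (a j) with hm
    have hmb : m < b i := max_lt (hab i) (hbe ▸ hab j)
    have hz1 : (m + b i) / 2 ∈ Set.Ioo (a i) (b i) :=
      ⟨by linarith [le_max_left (a i) (a j)], by linarith⟩
    have hz2 : (m + b i) / 2 ∈ Set.Ioo (a j) (b j) :=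
      ⟨by linarith [le_max_right (a i) (a j)], by rw [← hbe]; linarith⟩
    exact Set.disjoint_left.mp (hdisj hne) hz1 hz2
  -- the sum
  haveI : Countable ι :=
    hdisj.countable_of_isOpen_disjoint (fun i => isOpen_Ioo)
      (fun i => Set.nonempty_Ioo.2 (hab i))
  have key : ∑' i, ENNReal.ofReal (b i - a i) = ENNReal.ofReal (y - x) := by
    calc ∑' i, ENNReal.ofReal (b i - a i)
        = ∑' i, volume (Set.Ioo (a i) (b i)) := by simp [Real.volume_Ioo]
      _ = volume (⋃ i, Set.Ioo (a i) (b i)) :=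
          (measure_iUnion hdisj fun i => measurableSet_Ioo).symm
      _ = volume (Set.Ioo x y \ S) := by rw [hcover]
      _ = volume (Set.Ioo x y) := measure_diff_null hmeas
      _ = ENNReal.ofReal (y - x) := Real.volume_Ioo
  have hnetop : ∀ i, ENNReal.ofReal (b i - a i) ≠ ⊤ := fun _ => ENNReal.ofReal_ne_top
  have hsummable : Summable fun i => b i - a i := by
    refine (ENNReal.summable_toReal (by rw [key]; exact ENNReal.ofReal_ne_top)).congr
      fun i => ?_
    exact ENNReal.toReal_ofReal (by linarith [hab i])
  have htsum : ∑' i, (b i - a i) = y - x := by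
    calc ∑' i, (b i - a i)
        = ∑' i, (ENNReal.ofReal (b i - a i)).toReal :=
          tsum_congr fun i => (ENNReal.toReal_ofReal (by linarith [hab i])).symm
      _ = (∑' i, ENNReal.ofReal (b i - a i)).toReal := (ENNReal.tsum_toReal_eq hnetop).symm
      _ = y - x := by rw [key]; exact ENNReal.toReal_ofReal (by linarith)
  refine ⟨htsum ▸ hsummable.hasSum, fun i => ⟨hbS i, (hsupa i).csSup_eq, haS i⟩, hinj, ?_⟩
  ext s
  constructor
  · rintro ⟨i, rfl⟩
    exact ⟨⟨hbS i, by rw [(hsupa i).csSup_eq]; exact hab i⟩, hbx i, hby i⟩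
  · rintro ⟨⟨hsS, hssup⟩, hxs, hsy⟩
    set c := sSup { t ∈ S | t < s } with hc
    have hbdd : BddAbove { t ∈ S | t < s } := ⟨s, fun t ht => ht.2.le⟩
    have hxc : x ≤ c := le_csSup hbdd ⟨hx, hxs⟩
    have hzmem : (c + s) / 2 ∈ Set.Ioo x y \ S := by
      refine ⟨⟨by linarith, by linarith⟩, fun hzS => ?_⟩
      have : (c + s) / 2 ≤ c := le_csSup hbdd ⟨hzS, by linarith⟩
      linarith
    rw [hcover, Set.mem_iUnion] at hzmem
    obtain ⟨i, hi⟩ := hzmem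
    refine ⟨i, le_antisymm ?_ ?_⟩
    · by_contra h
      push_neg at h
      exact hnS i s hsS ⟨by linarith [hi.1], h⟩
    · by_contra h
      push_neg at h
      have : b i ≤ c := le_csSup hbdd ⟨hbS i, h⟩
      linarith [hi.2]
end
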